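/- arXiv:2107.01373 — 7 statements merged into one kernel-verified Lean document; each statement's English description precedes it below -/
import Mathlib

section
/- For every n ≥ 1, let H₀ be the 4-block n-fold integer matrix with n+1 block rows built from the row vectors C = (-1,-1,-1), D = (5,3), B = (0,-1,1), A = (3,4): the first row of H₀ is (C, D, D, …, D) (one copy of D per block column 1,…,n) and for 1 ≤ i ≤ n the (i+1)-st row is (B, 0, …, 0, A, 0, …, 0) with A in block column i. Let g = (g⁰, g¹, …, gⁿ) ∈ ℤ^{3+2n} with g⁰ = (1, n-1, n) and gⁱ = (1, -1) for all 1 ≤ i ≤ n. Then H₀ g = 0, g is a Graver basis element of H₀ (i.e., g is a ⊑-minimal element of ker_ℤ(H₀)\{0}), and ‖g‖∞ = n. In particular, there exists a 4-block n-fold matrix with s_B = s_D = 1 some of whose Graver basis elements have ℓ∞-norm Ω(n). -/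
open Matrix

/-- The conformal order `x ⊑ y` on integer vectors: `x` and `y` are sign-compatible
and `|x k| ≤ |y k|` in every coordinate. -/
def Conf {ι : Type*} (x y : ι → ℤ) : Prop :=
  ∀ k, 0 ≤ x k * y k ∧ |x k| ≤ |y k|

/-- The ℓ∞-norm of an integer vector, as a natural number. -/
def linf {ι : Type*} [Fintype ι] (x : ι → ℤ) : ℕ :=
  Finset.univ.sup fun k => (x k).natAbs

/-- `g` is a Graver basis element of the integer matrix `A`, i.e. a `⊑`-minimal
element of `ker_ℤ(A) \ {0}`. -/
def IsGraver {R ι : Type*} [Fintype R] [Fintype ι] (A : Matrix R ι ℤ) (g : ι → ℤ) : Prop :=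
  A.mulVec g = 0 ∧ g ≠ 0 ∧ ∀ y, A.mulVec y = 0 → y ≠ 0 → Conf y g → y = g

/-- The generalized 4-block n-fold matrix built from `C`, the `D i`'s, the `B i`'s and
the `A i`'s. -/
def H4 {n sA tA sD tB : ℕ} (C : Matrix (Fin sD) (Fin tB) ℤ)
    (D : Fin n → Matrix (Fin sD) (Fin tA) ℤ)
    (B : Fin n → Matrix (Fin sA) (Fin tB) ℤ)
    (A : Fin n → Matrix (Fin sA) (Fin tA) ℤ) :
    Matrix (Fin sD ⊕ Fin n × Fin sA) (Fin tB ⊕ Fin n × Fin tA) ℤ :=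
  Matrix.of fun r c =>
    match r, c with
    | Sum.inl r, Sum.inl c => C r c
    | Sum.inl r, Sum.inr ic => D ic.1 r ic.2
    | Sum.inr ir, Sum.inl c => B ir.1 ir.2 c
    | Sum.inr ir, Sum.inr ic => if ir.1 = ic.1 then A ir.1 ir.2 ic.2 else 0

/-- The two-stage stochastic matrix obtained from the generalized 4-block n-fold matrix
by deleting the first block row. -/
def Htwo {n sA tA tB : ℕ}
    (B : Fin n → Matrix (Fin sA) (Fin tB) ℤ)
    (A : Fin n → Matrix (Fin sA) (Fin tA) ℤ) :
    Matrix (Fin n × Fin sA) (Fin tB ⊕ Fin n × Fin tA) ℤ :=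
  Matrix.of fun r c =>
    match c with
    | Sum.inl c => B r.1 r.2 c
    | Sum.inr ic => if r.1 = ic.1 then A r.1 r.2 ic.2 else 0

/-- A vector is tier-0 if `B i x⁰ = 0` for all `i`. -/
def TierZero {n sA tA tB : ℕ} (B : Fin n → Matrix (Fin sA) (Fin tB) ℤ)
    (x : Fin tB ⊕ Fin n × Fin tA → ℤ) : Prop :=
  ∀ i, (B i).mulVec (fun c => x (Sum.inl c)) = 0

/-- A vector is tier-1 (w.r.t. `q`) if `B i x⁰ = q` for all `i`. -/
def TierOne {n sA tA tB : ℕ} (B : Fin n → Matrix (Fin sA) (Fin tB) ℤ)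
    (q : Fin sA → ℤ) (x : Fin tB ⊕ Fin n × Fin tA → ℤ) : Prop :=
  ∀ i, (B i).mulVec (fun c => x (Sum.inl c)) = q

/-- A uniform decomposition of `g`: `g = ∑ η j`, each `η j ⊑ g` lies in the kernel of the
two-stage part, and each `η j` is tier-0 or tier-1 for a fixed `q ≠ 0`. -/
def UniformDecomp {n sA tA tB : ℕ}
    (B : Fin n → Matrix (Fin sA) (Fin tB) ℤ)
    (A : Fin n → Matrix (Fin sA) (Fin tA) ℤ)
    (g : Fin tB ⊕ Fin n × Fin tA → ℤ) {N : ℕ}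
    (η : Fin N → Fin tB ⊕ Fin n × Fin tA → ℤ) (q : Fin sA → ℤ) : Prop :=
  q ≠ 0 ∧ g = ∑ j, η j ∧
    ∀ j, Conf (η j) g ∧ (Htwo B A).mulVec (η j) = 0 ∧
      (TierZero B (η j) ∨ TierOne B q (η j))

/-- A uniform decomposition is ω-balanced if the number of tier-0 summands is at most
ω times the number of tier-1 summands. -/
def BalancedUD {n sA tA tB : ℕ} (ω : ℕ)
    (B : Fin n → Matrix (Fin sA) (Fin tB) ℤ) (q : Fin sA → ℤ)
    {N : ℕ} (η : Fin N → Fin tB ⊕ Fin n × Fin tA → ℤ) : Prop :=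
  Nat.card {j : Fin N // TierZero B (η j)} ≤ ω * Nat.card {j : Fin N // TierOne B q (η j)}

/-- The concrete 4-block n-fold matrix of Theorem 2 (lower bound), with
`C = (-1,-1,-1)`, `D = (5,3)`, `B = (0,-1,1)`, `A = (3,4)`. -/
def H0ex (n : ℕ) : Matrix (Fin 1 ⊕ Fin n × Fin 1) (Fin 3 ⊕ Fin n × Fin 2) ℤ :=
  H4 !![(-1 : ℤ), -1, -1] (fun _ => !![(5 : ℤ), 3]) (fun _ => !![(0 : ℤ), -1, 1])
    (fun _ => !![(3 : ℤ), 4])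

/-- The vector `g` with `g⁰ = (1, n-1, n)` and `gⁱ = (1, -1)` for `1 ≤ i ≤ n`. -/
def gex (n : ℕ) : Fin 3 ⊕ Fin n × Fin 2 → ℤ :=
  Sum.elim ![1, (n : ℤ) - 1, (n : ℤ)] fun p => ![1, -1] p.2

lemma row0 (n : ℕ) (y : Fin 3 ⊕ Fin n × Fin 2 → ℤ) :
    (H0ex n).mulVec y (Sum.inl 0) =
      -(y (Sum.inl 0)) - y (Sum.inl 1) - y (Sum.inl 2)
        + ∑ i : Fin n, (5 * y (Sum.inr (i, 0)) + 3 * y (Sum.inr (i, 1))) := by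
  simp [H0ex, H4, Matrix.mulVec, dotProduct, Fintype.sum_sum_type,
    Fintype.sum_prod_type, Fin.sum_univ_three, Fin.sum_univ_two]
  ring

lemma rowi (n : ℕ) (y : Fin 3 ⊕ Fin n × Fin 2 → ℤ) (i : Fin n) :
    (H0ex n).mulVec y (Sum.inr (i, 0)) =
      -(y (Sum.inl 1)) + y (Sum.inl 2) + 3 * y (Sum.inr (i, 0)) + 4 * y (Sum.inr (i, 1)) := by
  simp [H0ex, H4, Matrix.mulVec, dotProduct, Fintype.sum_sum_type,
    Fintype.sum_prod_type, Fin.sum_univ_three, Fin.sum_univ_two, ite_mul,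
    Finset.sum_ite_eq, Finset.mul_sum]
  ring

lemma gex_inl0 (n : ℕ) : gex n (Sum.inl 0) = 1 := rfl
lemma gex_inl1 (n : ℕ) : gex n (Sum.inl 1) = (n : ℤ) - 1 := rfl
lemma gex_inl2 (n : ℕ) : gex n (Sum.inl 2) = (n : ℤ) := rfl
lemma gex_inr0 (n : ℕ) (i : Fin n) : gex n (Sum.inr (i, 0)) = 1 := rfl
lemma gex_inr1 (n : ℕ) (i : Fin n) : gex n (Sum.inr (i, 1)) = -1 := rfl

lemma Hg (n : ℕ) : (H0ex n).mulVec (gex n) = 0 := by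
  funext r
  rcases r with r | ⟨i, r⟩
  · have hr : r = 0 := Subsingleton.elim _ _
    subst hr
    show (H0ex n).mulVec (gex n) (Sum.inl 0) = 0
    rw [row0]
    simp [gex_inl0, gex_inl1, gex_inl2, gex_inr0, gex_inr1]
    ring
  · have hr : r = 0 := Subsingleton.elim _ _
    subst hr
    show (H0ex n).mulVec (gex n) (Sum.inr (i, 0)) = 0
    rw [rowi]
    simp [gex_inl0, gex_inl1, gex_inl2, gex_inr0, gex_inr1]

/-- `H₀ g = 0`, `g` is a Graver basis element of `H₀`, and `‖g‖∞ = n`. -/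
theorem stmt0 (n : ℕ) (hn : 1 ≤ n) :
    (H0ex n).mulVec (gex n) = 0 ∧ IsGraver (H0ex n) (gex n) ∧ linf (gex n) = n := by
  have hn1 : (1 : ℤ) ≤ (n : ℤ) := by exact_mod_cast hn
  refine ⟨Hg n, ⟨Hg n, ?_, ?_⟩, ?_⟩
  · -- gex n ≠ 0
    intro h
    have := congrFun h (Sum.inl 0)
    simp [gex_inl0] at this
  · -- minimality
    intro y hker hy0 hconf
    -- bounds from conformality
    have hca : 0 ≤ y (Sum.inl 0) ∧ y (Sum.inl 0) ≤ 1 := by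
      have := hconf (Sum.inl 0)
      rw [gex_inl0, abs_one] at this
      exact ⟨by simpa using this.1, (abs_le.mp this.2).2⟩
    have hcb : 0 ≤ y (Sum.inl 1) ∧ y (Sum.inl 1) ≤ (n : ℤ) - 1 := by
      have h := hconf (Sum.inl 1)
      rw [gex_inl1] at h
      have hnn : (0:ℤ) ≤ (n:ℤ) - 1 := by omega
      have habs := abs_le.mp (h.2.trans_eq (abs_of_nonneg hnn))
      refine ⟨?_, habs.2⟩
      rcases eq_or_lt_of_le hn1 with h1 | h1
      · omega
      · by_contra hb0
        push_neg at hb0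
        have hneg : y (Sum.inl 1) * ((n:ℤ) - 1) < 0 :=
          mul_neg_of_neg_of_pos hb0 (by omega)
        linarith [h.1]
    have hcc : 0 ≤ y (Sum.inl 2) ∧ y (Sum.inl 2) ≤ (n : ℤ) := by
      have h := hconf (Sum.inl 2)
      rw [gex_inl2] at h
      have habs := abs_le.mp (h.2.trans_eq (abs_of_nonneg (by omega)))
      refine ⟨?_, habs.2⟩
      by_contra hc0
      push_neg at hc0
      have hneg : y (Sum.inl 2) * (n:ℤ) < 0 := mul_neg_of_neg_of_pos hc0 (by omega)
      linarith [h.1]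
    have hcu : ∀ i : Fin n, 0 ≤ y (Sum.inr (i, 0)) ∧ y (Sum.inr (i, 0)) ≤ 1 := by
      intro i
      have h := hconf (Sum.inr (i, 0))
      rw [gex_inr0, abs_one] at h
      exact ⟨by simpa using h.1, (abs_le.mp h.2).2⟩
    have hcv : ∀ i : Fin n, -1 ≤ y (Sum.inr (i, 1)) ∧ y (Sum.inr (i, 1)) ≤ 0 := by
      intro i
      have h := hconf (Sum.inr (i, 1))
      rw [gex_inr1] at h
      have h2 : |y (Sum.inr (i, 1))| ≤ 1 := by simpa using h.2
      exact ⟨(abs_le.mp h2).1, by linarith [h.1]⟩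
    -- kernel equations
    have heqi : ∀ i : Fin n,
        3 * y (Sum.inr (i, 0)) + 4 * y (Sum.inr (i, 1)) = y (Sum.inl 1) - y (Sum.inl 2) := by
      intro i
      have h := congrFun hker (Sum.inr (i, 0))
      rw [rowi] at h
      simp at h
      omega
    have heq0 : y (Sum.inl 0) + y (Sum.inl 1) + y (Sum.inl 2)
        = ∑ i : Fin n, (5 * y (Sum.inr (i, 0)) + 3 * y (Sum.inr (i, 1))) := by
      have h := congrFun hker (Sum.inl 0)
      rw [row0] at h
      simp at h
      linarith
    have i0 : Fin n := ⟨0, hn⟩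
    have ht : y (Sum.inl 1) - y (Sum.inl 2) = 0 ∨ y (Sum.inl 1) - y (Sum.inl 2) = 3 ∨
        y (Sum.inl 1) - y (Sum.inl 2) = -4 ∨ y (Sum.inl 1) - y (Sum.inl 2) = -1 := by
      have h1 := heqi i0
      obtain ⟨h2a, h2b⟩ := hcu i0
      obtain ⟨h3a, h3b⟩ := hcv i0
      have hd : y (Sum.inr (i0, 0)) = 0 ∨ y (Sum.inr (i0, 0)) = 1 := by omega
      have he : y (Sum.inr (i0, 1)) = -1 ∨ y (Sum.inr (i0, 1)) = 0 := by omega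
      rcases hd with hd | hd <;> rcases he with he | he <;> rw [hd, he] at h1 <;> omega
    rcases ht with ht | ht | ht | ht
    · -- t = 0 : y = 0, contradiction
      exfalso
      apply hy0
      have huv : ∀ i : Fin n, y (Sum.inr (i, 0)) = 0 ∧ y (Sum.inr (i, 1)) = 0 := by
        intro i; have := heqi i; have h2 := hcu i; have h3 := hcv i; omega
      have hs : ∑ i : Fin n, (5 * y (Sum.inr (i, 0)) + 3 * y (Sum.inr (i, 1))) = 0 :=
        Finset.sum_eq_zero fun i _ => by rw [(huv i).1, (huv i).2]; ring
      rw [hs] at heq0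
      funext k
      rcases k with k | ⟨i, k⟩
      · match k with
        | 0 => show y (Sum.inl 0) = 0; omega
        | 1 => show y (Sum.inl 1) = 0; omega
        | 2 => show y (Sum.inl 2) = 0; omega
      · match k with
        | 0 => exact (huv i).1
        | 1 => exact (huv i).2
    · -- t = 3 : impossible
      exfalso
      have huv : ∀ i : Fin n, y (Sum.inr (i, 0)) = 1 ∧ y (Sum.inr (i, 1)) = 0 := by
        intro i; have := heqi i; have h2 := hcu i; have h3 := hcv i; omega
      have hs : ∑ i : Fin n, (5 * y (Sum.inr (i, 0)) + 3 * y (Sum.inr (i, 1))) = 5 * n := by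
        rw [Finset.sum_congr rfl fun i _ => by rw [(huv i).1, (huv i).2]]
        simp [Finset.sum_const, mul_comm]
      rw [hs] at heq0
      omega
    · -- t = -4 : impossible
      exfalso
      have huv : ∀ i : Fin n, y (Sum.inr (i, 0)) = 0 ∧ y (Sum.inr (i, 1)) = -1 := by
        intro i; have := heqi i; have h2 := hcu i; have h3 := hcv i; omega
      have hs : ∑ i : Fin n, (5 * y (Sum.inr (i, 0)) + 3 * y (Sum.inr (i, 1))) = -3 * n := by
        rw [Finset.sum_congr rfl fun i _ => by rw [(huv i).1, (huv i).2]]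
        simp [Finset.sum_const, mul_comm]
      rw [hs] at heq0
      omega
    · -- t = -1 : y = g
      have huv : ∀ i : Fin n, y (Sum.inr (i, 0)) = 1 ∧ y (Sum.inr (i, 1)) = -1 := by
        intro i; have := heqi i; have h2 := hcu i; have h3 := hcv i; omega
      have hs : ∑ i : Fin n, (5 * y (Sum.inr (i, 0)) + 3 * y (Sum.inr (i, 1))) = 2 * n := by
        rw [Finset.sum_congr rfl fun i _ => by rw [(huv i).1, (huv i).2]]
        simp [Finset.sum_const, mul_comm]
      rw [hs] at heq0
      funext k
      rcases k with k | ⟨i, k⟩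
      · match k with
        | 0 => show y (Sum.inl 0) = gex n (Sum.inl 0); rw [gex_inl0]; omega
        | 1 => show y (Sum.inl 1) = gex n (Sum.inl 1); rw [gex_inl1]; omega
        | 2 => show y (Sum.inl 2) = gex n (Sum.inl 2); rw [gex_inl2]; omega
      · match k with
        | 0 => show y (Sum.inr (i, 0)) = gex n (Sum.inr (i, 0)); rw [gex_inr0]; exact (huv i).1
        | 1 => show y (Sum.inr (i, 1)) = gex n (Sum.inr (i, 1)); rw [gex_inr1]; exact (huv i).2
  · -- linf
    show (Finset.univ.sup fun k => ((gex n) k).natAbs) = n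
    apply le_antisymm
    · apply Finset.sup_le
      rintro (k | ⟨i, k⟩) -
      · match k with
        | 0 => show (gex n (Sum.inl 0)).natAbs ≤ n; rw [gex_inl0]; simp; omega
        | 1 => show (gex n (Sum.inl 1)).natAbs ≤ n; rw [gex_inl1]; omega
        | 2 => show (gex n (Sum.inl 2)).natAbs ≤ n; rw [gex_inl2]; simp
      · match k with
        | 0 => show (gex n (Sum.inr (i, 0))).natAbs ≤ n; rw [gex_inr0]; simpa using hn
        | 1 => show (gex n (Sum.inr (i, 1))).natAbs ≤ n; rw [gex_inr1]; simpa using hn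
    · calc n = ((gex n) (Sum.inl 2)).natAbs := by rw [gex_inl2]; simp
        _ ≤ _ := Finset.le_sup (f := fun k => ((gex n) k).natAbs) (Finset.mem_univ _)
end

section
/- Colorful Steinitz-type lemma: Let d, ζ, μ, α₁, …, α_μ, m̄ be positive integers, set α = Σ_{j=1}^μ α_j and M = α·m̄. Let x₁, …, x_M ∈ ℤ^d be vectors with ‖x_i‖∞ ≤ ζ for every i, each assigned one of μ colors, such that exactly α_j·m̄ of the vectors have color j for each j, and Σ_{i=1}^M x_i = 0. If M > (2dζ + 2μζ + 1)^{d+μ}·α + α + d + μ, then there exist a positive integer m ≤ (2dζ + 2μζ + 1)^{d+μ} and a subset T ⊆ {1,…,M} such that, for every color j, T contains exactly α_j·m indices of color j, and Σ_{i∈T} x_i = 0. -/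
open Matrix

section Steinitz

variable {m : ℕ} {ι : Type*} [Fintype ι] [DecidableEq ι]

/-- The invariant carried along the Grinberg–Sevastyanov construction. -/
def Qv (v : Fin m → ι → ℚ) (A : Finset (Fin m)) (lam : Fin m → ℚ) : Prop :=
  (∀ i, 0 ≤ lam i ∧ lam i ≤ 1) ∧ (∀ i, i ∉ A → lam i = 0) ∧
  (∑ i ∈ A, lam i = (A.card : ℚ) - (Fintype.card ι : ℚ)) ∧
  (∀ k, ∑ i ∈ A, lam i * v i k = 0)

lemma gs_step (v : Fin m → ι → ℚ) (A : Finset (Fin m)) (lam : Fin m → ℚ)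
    (hQ : Qv v A lam) (hk : Fintype.card ι < A.card) :
    ∃ e ∈ A, ∃ lam', Qv v (A.erase e) lam' := by
  classical
  set n : ℕ := Fintype.card ι with hn
  obtain ⟨hb, hsupp, hsum, hker⟩ := hQ
  -- the target sum value
  set c : ℚ := (A.card : ℚ) - 1 - n with hc
  have hcnonneg : 0 ≤ c := by
    have : (n : ℚ) + 1 ≤ (A.card : ℚ) := by exact_mod_cast hk
    simp [hc]; linarith
  -- the set of admissible coefficient vectors
  set P : Set (Fin m → ℚ) := {l | (∀ i, 0 ≤ l i ∧ l i ≤ 1) ∧ (∀ i, i ∉ A → l i = 0) ∧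
    (∑ i ∈ A, l i = c) ∧ (∀ k, ∑ i ∈ A, l i * v i k = 0)} with hP
  have hPne : P.Nonempty := by
    refine ⟨fun i => (c / (c + 1)) * lam i, ?_, ?_, ?_, ?_⟩
    · intro i
      have h1 : 0 ≤ c / (c + 1) := by positivity
      have h2 : c / (c + 1) ≤ 1 := by
        rw [div_le_one (by linarith)]; linarith
      constructor
      · exact mul_nonneg h1 (hb i).1
      · calc c / (c+1) * lam i ≤ 1 * 1 := by
              exact mul_le_mul h2 (hb i).2 (hb i).1 one_pos.le
          _ = 1 := by ring
    · intro i hi; simp [hsupp i hi]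
    · rw [← Finset.mul_sum, hsum]
      have : (A.card : ℚ) - n = c + 1 := by simp [hc]; ring
      rw [this, div_mul_cancel₀]
      linarith
    · intro k
      have := hker k
      calc ∑ i ∈ A, c / (c+1) * lam i * v i k
          = c / (c+1) * ∑ i ∈ A, lam i * v i k := by
            rw [Finset.mul_sum]; congr 1; ext i; ring
        _ = 0 := by rw [this, mul_zero]
  -- the count of integral coordinates
  set cnt : (Fin m → ℚ) → ℕ := fun l => (A.filter (fun i => l i = 0 ∨ l i = 1)).card with hcnt
  set S : Set ℕ := cnt '' P with hS
  have hSne : S.Nonempty := hPne.image cnt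
  have hSbdd : BddAbove S := by
    refine ⟨A.card, ?_⟩
    rintro x ⟨l, _, rfl⟩
    exact Finset.card_filter_le _ _
  obtain ⟨l, hlP, hlcnt⟩ := Nat.sSup_mem hSne hSbdd
  obtain ⟨hlb, hlsupp, hlsum, hlker⟩ := hlP
  -- the fractional set
  set F : Finset (Fin m) := A.filter (fun i => ¬(l i = 0 ∨ l i = 1)) with hF
  have hFcard : F.card ≤ n + 1 := by
    by_contra hbig
    push_neg at hbig
    -- dimension counting: get a nontrivial relation
    set w : F → (Option ι → ℚ) := fun i => fun o => o.elim 1 (v i.1) with hw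
    have hnotli : ¬ LinearIndependent ℚ w := by
      intro hli
      have := hli.fintype_card_le_finrank
      rw [Module.finrank_pi, Fintype.card_coe] at this
      simp [Fintype.card_option, hn] at this
      omega
    rw [Fintype.not_linearIndependent_iff] at hnotli
    obtain ⟨g, hg0, ⟨i₀, hi₀⟩⟩ := hnotli
    set δ : Fin m → ℚ := fun i => if h : i ∈ F then g ⟨i, h⟩ else 0 with hδ
    have hδF : ∀ i ∉ F, δ i = 0 := fun i hi => by simp [hδ, hi]
    have hδsum : ∑ i ∈ F, δ i = 0 := by
      have := congrFun hg0 none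
      simp only [Finset.sum_apply, Pi.smul_apply, hw, Option.elim, smul_eq_mul, mul_one,
        Pi.zero_apply] at this
      rw [← Finset.sum_attach F (fun i => δ i)]
      convert this using 1
      apply Finset.sum_congr rfl
      intro i _
      simp [hδ, i.2]
    have hδker : ∀ k, ∑ i ∈ F, δ i * v i k = 0 := by
      intro k
      have := congrFun hg0 (some k)
      simp only [Finset.sum_apply, Pi.smul_apply, hw, Option.elim, smul_eq_mul,
        Pi.zero_apply] at this
      rw [← Finset.sum_attach F (fun i => δ i * v i k)]
      convert this using 1
      apply Finset.sum_congr rfl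
      intro i _
      simp [hδ, i.2]
    -- the moving set
    set F' : Finset (Fin m) := F.filter (fun i => δ i ≠ 0) with hF'
    have hF'ne : F'.Nonempty := by
      refine ⟨i₀.1, ?_⟩
      simp only [hF', Finset.mem_filter]
      refine ⟨i₀.2, ?_⟩
      simpa [hδ, i₀.2] using hi₀
    -- fractional coordinates are strictly between 0 and 1
    have hfrac : ∀ i ∈ F, 0 < l i ∧ l i < 1 := by
      intro i hi
      rw [hF, Finset.mem_filter] at hi
      push_neg at hi
      exact ⟨lt_of_le_of_ne (hlb i).1 (Ne.symm hi.2.1), lt_of_le_of_ne (hlb i).2 hi.2.2⟩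
    set r : Fin m → ℚ := fun i => if 0 < δ i then (1 - l i) / δ i else l i / (-δ i) with hr
    have hrpos : ∀ i ∈ F', 0 < r i := by
      intro i hi
      rw [hF', Finset.mem_filter] at hi
      obtain ⟨hiF, hiδ⟩ := hi
      obtain ⟨h1, h2⟩ := hfrac i hiF
      rcases lt_or_gt_of_ne hiδ with hlt | hgt
      · have hnl : ¬ 0 < δ i := not_lt.mpr hlt.le
        rw [hr]; simp only [if_neg hnl]
        exact div_pos h1 (by linarith)
      · rw [hr]; simp only [if_pos hgt]
        exact div_pos (by linarith) hgt
    set t : ℚ := F'.inf' hF'ne r with ht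
    have htpos : 0 < t := by
      rw [ht, Finset.lt_inf'_iff]
      exact hrpos
    set l' : Fin m → ℚ := fun i => l i + t * δ i with hl'
    -- facts about unchanged coordinates
    have hunch : ∀ i ∉ F, l' i = l i := by
      intro i hi; simp [hl', hδF i hi]
    have hbnd' : ∀ i, 0 ≤ l' i ∧ l' i ≤ 1 := by
      intro i
      by_cases hiF : i ∈ F
      · by_cases hiδ : δ i = 0
        · simp [hl', hiδ]; exact hlb i
        · have hiF' : i ∈ F' := by rw [hF', Finset.mem_filter]; exact ⟨hiF, hiδ⟩
          have htle : t ≤ r i := Finset.inf'_le _ hiF'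
          obtain ⟨h1, h2⟩ := hfrac i hiF
          rcases lt_or_gt_of_ne hiδ with hlt | hgt
          · have hri : r i = l i / (-δ i) := by
              rw [hr]; simp [not_lt.mpr hlt.le]
            constructor
            · have : t * (-δ i) ≤ r i * (-δ i) :=
                mul_le_mul_of_nonneg_right htle (by linarith)
              rw [hri, div_mul_cancel₀ _ (by linarith : (-δ i) ≠ 0)] at this
              simp [hl']; nlinarith
            · have : t * δ i ≤ 0 := by nlinarith
              simp [hl']; nlinarith
          · have hri : r i = (1 - l i) / δ i := by rw [hr]; simp [hgt]
            constructor
            · have : 0 ≤ t * δ i := by positivity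
              simp [hl']; nlinarith
            · have : t * δ i ≤ r i * δ i := mul_le_mul_of_nonneg_right htle hgt.le
              rw [hri, div_mul_cancel₀ _ hgt.ne'] at this
              simp [hl']; nlinarith
      · rw [hunch i hiF]; exact hlb i
    have hFA : F ⊆ A := Finset.filter_subset _ _
    have hδA : ∀ i ∈ A, i ∉ F → δ i = 0 := fun i _ hi => hδF i hi
    have hδsumA : ∑ i ∈ A, δ i = 0 := by
      rw [← Finset.sum_subset hFA (fun i hi hif => hδF i hif)]; exact hδsum
    have hδkerA : ∀ k, ∑ i ∈ A, δ i * v i k = 0 := by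
      intro k
      rw [← Finset.sum_subset hFA (fun i hi hif => by rw [hδF i hif, zero_mul])]
      exact hδker k
    have hl'P : l' ∈ P := by
      refine ⟨hbnd', ?_, ?_, ?_⟩
      · intro i hi
        have hiF : i ∉ F := fun h => hi (hFA h)
        rw [hunch i hiF]; exact hlsupp i hi
      · rw [hl']
        simp only [Finset.sum_add_distrib, ← Finset.mul_sum, hδsumA, mul_zero, add_zero, hlsum]
      · intro k
        have : ∑ i ∈ A, (l i + t * δ i) * v i k
            = ∑ i ∈ A, l i * v i k + t * ∑ i ∈ A, δ i * v i k := by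
          rw [Finset.mul_sum, ← Finset.sum_add_distrib]
          apply Finset.sum_congr rfl; intro i _; ring
        rw [hl']; rw [this, hlker k, hδkerA k]; ring
    -- count strictly increases
    obtain ⟨i₁, hi₁F', hi₁⟩ := Finset.exists_mem_eq_inf' hF'ne r
    have hi₁F : i₁ ∈ F := (Finset.mem_filter.mp hi₁F').1
    have hi₁δ : δ i₁ ≠ 0 := (Finset.mem_filter.mp hi₁F').2
    have hi₁int : l' i₁ = 0 ∨ l' i₁ = 1 := by
      rcases lt_or_gt_of_ne hi₁δ with hlt | hgt
      · left
        have hri : r i₁ = l i₁ / (-δ i₁) := by rw [hr]; simp [not_lt.mpr hlt.le]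
        rw [hl']; simp only
        rw [← ht] at hi₁
        rw [hi₁, hri, div_neg, neg_mul, div_mul_cancel₀ _ hi₁δ]
        ring
      · right
        have hri : r i₁ = (1 - l i₁) / δ i₁ := by rw [hr]; simp [hgt]
        rw [hl']; simp only
        rw [← ht] at hi₁
        rw [hi₁, hri, div_mul_cancel₀ _ hi₁δ]
        ring
    have hsub : A.filter (fun i => l i = 0 ∨ l i = 1) ⊂ A.filter (fun i => l' i = 0 ∨ l' i = 1) := by
      constructor
      · intro i hi
        rw [Finset.mem_filter] at hi ⊢
        refine ⟨hi.1, ?_⟩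
        have hiF : i ∉ F := by
          rw [hF, Finset.mem_filter]
          push_neg
          intro _; simpa using hi.2
        rw [hunch i hiF]; exact hi.2
      · intro hcon
        have : i₁ ∈ A.filter (fun i => l i = 0 ∨ l i = 1) := by
          apply hcon
          rw [Finset.mem_filter]
          exact ⟨hFA hi₁F, hi₁int⟩
        rw [Finset.mem_filter] at this
        exact (Finset.mem_filter.mp hi₁F).2 this.2
    have hlt : cnt l < cnt l' := Finset.card_lt_card hsub
    have : cnt l' ≤ sSup S := le_csSup hSbdd ⟨l', hl'P, rfl⟩
    omega
  have hFA' : F ⊆ A := Finset.filter_subset _ _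
  -- now find a zero coordinate
  have hZ : ∃ e ∈ A, l e = 0 := by
    by_contra hno
    push_neg at hno
    set O : Finset (Fin m) := A.filter (fun i => l i = 1) with hO
    have hAsub : A ⊆ O ∪ F := by
      intro i hi
      by_cases h1 : l i = 1
      · exact Finset.mem_union_left _ (Finset.mem_filter.mpr ⟨hi, h1⟩)
      · refine Finset.mem_union_right _ (Finset.mem_filter.mpr ⟨hi, ?_⟩)
        push_neg
        exact ⟨hno i hi, h1⟩
    have hdisj : Disjoint O F := by
      rw [Finset.disjoint_left]
      intro i hiO hiF
      exact (Finset.mem_filter.mp hiF).2 (Or.inr (Finset.mem_filter.mp hiO).2)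
    have hOcard : (∑ i ∈ O, l i) = (O.card : ℚ) := by
      rw [Finset.sum_congr rfl (fun i hi => (Finset.mem_filter.mp hi).2)]
      simp
      rfl
    have hAcardle : A.card ≤ O.card + F.card := by
      calc A.card ≤ (O ∪ F).card := Finset.card_le_card hAsub
        _ ≤ O.card + F.card := Finset.card_union_le _ _
    have hAO : A \ O = F := by
      ext i
      simp only [Finset.mem_sdiff, hF, hO, Finset.mem_filter]
      constructor
      · rintro ⟨hiA, hiO⟩
        refine ⟨hiA, ?_⟩
        push_neg
        exact ⟨hno i hiA, fun h1 => hiO ⟨hiA, h1⟩⟩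
      · rintro ⟨hiA, hi2⟩
        push_neg at hi2
        exact ⟨hiA, fun h => hi2.2 h.2⟩
    have hsplit : (∑ i ∈ A, l i) = (O.card : ℚ) + ∑ i ∈ F, l i := by
      rw [← hOcard, ← hAO, ← Finset.sum_sdiff (Finset.filter_subset _ _ : O ⊆ A)]
      rw [hAO]; ring
    rcases F.eq_empty_or_nonempty with hFe | hFne
    · rw [hFe] at hsplit hAcardle
      simp at hsplit hAcardle
      rw [hlsum, hc] at hsplit
      have : (A.card : ℚ) ≤ (O.card : ℚ) := by exact_mod_cast hAcardle
      rw [← hsplit] at this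
      linarith
    · have hFpos : 0 < ∑ i ∈ F, l i := by
        apply Finset.sum_pos _ hFne
        intro i hi
        have hiA := hFA' hi
        exact lt_of_le_of_ne (hlb i).1 (Ne.symm (hno i hiA))
      rw [hlsum, hc] at hsplit
      have h1 : (O.card : ℚ) < (A.card : ℚ) - 1 - n := by linarith
      have h2 : (A.card : ℚ) ≤ (O.card : ℚ) + F.card := by exact_mod_cast hAcardle
      have h3 : (F.card : ℚ) ≤ n + 1 := by exact_mod_cast hFcard
      linarith
  obtain ⟨e, heA, hel⟩ := hZ
  refine ⟨e, heA, l, ?_, ?_, ?_, ?_⟩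
  · exact hlb
  · intro i hi
    by_cases hiA : i ∈ A
    · have : i = e := by
        by_contra hne
        exact hi (Finset.mem_erase.mpr ⟨hne, hiA⟩)
      rw [this]; exact hel
    · exact hlsupp i hiA
  · rw [Finset.sum_erase _ hel, hlsum, Finset.card_erase_of_mem heA]
    have : (1:ℕ) ≤ A.card := by omega
    push_cast [Nat.cast_sub this]
    ring
  · intro k
    rw [Finset.sum_erase _ (by rw [hel, zero_mul]), hlker k]

/-- One step of the construction, with classical choices. -/
noncomputable def nextStep (v : Fin m → ι → ℚ) (p : Finset (Fin m) × (Fin m → ℚ)) :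
    Finset (Fin m) × (Fin m → ℚ) := by
  classical
  exact if h : Fintype.card ι < p.1.card ∧ Qv v p.1 p.2 then
    (p.1.erase (gs_step v p.1 p.2 h.2 h.1).choose,
      ((gs_step v p.1 p.2 h.2 h.1).choose_spec.2).choose)
  else if h2 : p.1.Nonempty then (p.1.erase h2.choose, 0) else p

noncomputable def gsChain (v : Fin m → ι → ℚ) : ℕ → Finset (Fin m) × (Fin m → ℚ)
  | 0 => (Finset.univ, fun _ => ((m : ℚ) - Fintype.card ι) / m)
  | (s + 1) => nextStep v (gsChain v s)

lemma nextStep_subset (v : Fin m → ι → ℚ) (p : Finset (Fin m) × (Fin m → ℚ)) :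
    (nextStep v p).1 ⊆ p.1 := by
  classical
  rw [nextStep]
  split_ifs with h h2
  · exact Finset.erase_subset _ _
  · exact Finset.erase_subset _ _
  · exact subset_rfl

def GSInv (v : Fin m → ι → ℚ) (s : ℕ) (p : Finset (Fin m) × (Fin m → ℚ)) : Prop :=
  p.1.card = m - s ∧ (p.1.card ≤ Fintype.card ι ∨ Qv v p.1 p.2)

lemma gsChain_inv (v : Fin m → ι → ℚ) (h0 : ∀ k, ∑ i, v i k = 0) :
    ∀ s, s ≤ m → GSInv v s (gsChain v s) := by
  classical
  intro s
  induction s with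
  | zero =>
    intro _
    constructor
    · simp [gsChain]
    · by_cases hmn : m ≤ Fintype.card ι
      · left; simpa [gsChain] using hmn
      · right
        push_neg at hmn
        have hm0 : 0 < m := lt_of_le_of_lt (Nat.zero_le _) hmn
        have hmQ : (0:ℚ) < m := by exact_mod_cast hm0
        have hnm : (Fintype.card ι : ℚ) ≤ (m:ℚ) := by exact_mod_cast hmn.le
        refine ⟨?_, ?_, ?_, ?_⟩
        · intro i
          simp only [gsChain]
          constructor
          · apply div_nonneg _ hmQ.le; linarith
          · rw [div_le_one hmQ]; linarith
        · intro i hi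
          exact absurd (Finset.mem_univ i) (by simpa [gsChain] using hi)
        · simp only [gsChain, Finset.sum_const, Finset.card_univ, Fintype.card_fin,
            nsmul_eq_mul]
          field_simp
        · intro k
          simp only [gsChain]
          rw [← Finset.mul_sum, h0 k, mul_zero]
  | succ s ih =>
    intro hs
    have hinv := ih (by omega)
    obtain ⟨hcard, hdisj⟩ := hinv
    have hpos : 0 < (gsChain v s).1.card := by omega
    show GSInv v (s+1) (nextStep v (gsChain v s))
    rcases hdisj with hle | hQ
    · have hcond : ¬ (Fintype.card ι < (gsChain v s).1.card ∧ Qv v (gsChain v s).1 (gsChain v s).2) := by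
        rintro ⟨h1, _⟩; omega
      have hne : (gsChain v s).1.Nonempty := Finset.card_pos.mp hpos
      rw [nextStep]
      simp only [dif_neg hcond, dif_pos hne]
      constructor
      · simp [Finset.card_erase_of_mem hne.choose_spec, hcard]
        omega
      · left
        simp [Finset.card_erase_of_mem hne.choose_spec]
        omega
    · by_cases hlt : Fintype.card ι < (gsChain v s).1.card
      · have hcond : Fintype.card ι < (gsChain v s).1.card ∧ Qv v (gsChain v s).1 (gsChain v s).2 :=
          ⟨hlt, hQ⟩
        rw [nextStep]
        simp only [dif_pos hcond]
        have hspec := (gs_step v (gsChain v s).1 (gsChain v s).2 hcond.2 hcond.1).choose_spec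
        have hspec2 := hspec.2.choose_spec
        constructor
        · simp [Finset.card_erase_of_mem hspec.1, hcard]
          omega
        · right; exact hspec2
      · have hcond : ¬ (Fintype.card ι < (gsChain v s).1.card ∧ Qv v (gsChain v s).1 (gsChain v s).2) := by
          rintro ⟨h1, _⟩; omega
        have hne : (gsChain v s).1.Nonempty := Finset.card_pos.mp hpos
        rw [nextStep]
        simp only [dif_neg hcond, dif_pos hne]
        constructor
        · simp [Finset.card_erase_of_mem hne.choose_spec, hcard]
          omega
        · left
          simp [Finset.card_erase_of_mem hne.choose_spec]
          omega

lemma gs_bound (v : Fin m → ι → ℚ) (ζ : ℚ) (hζ : 0 ≤ ζ) (hb : ∀ i k, |v i k| ≤ ζ)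
    (A : Finset (Fin m)) (lam : Fin m → ℚ)
    (h : A.card ≤ Fintype.card ι ∨ Qv v A lam) (k : ι) :
    |∑ i ∈ A, v i k| ≤ (Fintype.card ι : ℚ) * ζ := by
  rcases h with hle | hQ
  · calc |∑ i ∈ A, v i k| ≤ ∑ i ∈ A, |v i k| := Finset.abs_sum_le_sum_abs _ _
      _ ≤ ∑ _i ∈ A, ζ := Finset.sum_le_sum (fun i _ => hb i k)
      _ = (A.card : ℚ) * ζ := by rw [Finset.sum_const, nsmul_eq_mul]
      _ ≤ (Fintype.card ι : ℚ) * ζ := by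
          apply mul_le_mul_of_nonneg_right _ hζ
          exact_mod_cast hle
  · obtain ⟨hbnd, _, hsum, hker⟩ := hQ
    have key : ∑ i ∈ A, v i k = ∑ i ∈ A, (1 - lam i) * v i k := by
      have : ∑ i ∈ A, (1 - lam i) * v i k
          = ∑ i ∈ A, v i k - ∑ i ∈ A, lam i * v i k := by
        rw [← Finset.sum_sub_distrib]
        apply Finset.sum_congr rfl; intro i _; ring
      rw [this, hker k, sub_zero]
    rw [key]
    calc |∑ i ∈ A, (1 - lam i) * v i k| ≤ ∑ i ∈ A, |(1 - lam i) * v i k| :=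
          Finset.abs_sum_le_sum_abs _ _
      _ ≤ ∑ i ∈ A, (1 - lam i) * ζ := by
          apply Finset.sum_le_sum
          intro i _
          rw [abs_mul, abs_of_nonneg (by linarith [(hbnd i).2] : (0:ℚ) ≤ 1 - lam i)]
          exact mul_le_mul_of_nonneg_left (hb i k) (by linarith [(hbnd i).2])
      _ = ((A.card : ℚ) - ((A.card : ℚ) - (Fintype.card ι : ℚ))) * ζ := by
          rw [← Finset.sum_mul]
          congr 1
          rw [Finset.sum_sub_distrib, Finset.sum_const, nsmul_eq_mul, mul_one, hsum]
      _ = (Fintype.card ι : ℚ) * ζ := by ring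

lemma steinitz_chain (v : Fin m → ι → ℚ) (ζ : ℚ) (hζ : 0 ≤ ζ) (hb : ∀ i k, |v i k| ≤ ζ)
    (h0 : ∀ k, ∑ i, v i k = 0) :
    ∃ A : ℕ → Finset (Fin m), (∀ t, A t ⊆ A (t + 1)) ∧ (∀ t, t ≤ m → (A t).card = t) ∧
      (∀ t k, |∑ i ∈ A t, v i k| ≤ (Fintype.card ι : ℚ) * ζ) := by
  classical
  refine ⟨fun t => (gsChain v (m - t)).1, ?_, ?_, ?_⟩
  · intro t
    show (gsChain v (m - t)).1 ⊆ (gsChain v (m - (t+1))).1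
    rcases Nat.lt_or_ge t m with h | h
    · have : m - t = (m - (t+1)) + 1 := by omega
      rw [this]
      exact nextStep_subset v _
    · have : m - t = m - (t+1) := by omega
      rw [this]
  · intro t ht
    have := (gsChain_inv v h0 (m - t) (by omega)).1
    rw [this]; omega
  · intro t k
    have hinv := gsChain_inv v h0 (m - t) (by omega)
    exact gs_bound v ζ hζ hb _ _ hinv.2 k

end Steinitz

/-- the colorful Steinitz-type lemma. -/
theorem stmt5 (d ζ μ mbar M : ℕ) (hd : 0 < d) (hζ : 0 < ζ) (hμ : 0 < μ) (hmbar : 0 < mbar)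
    (α : Fin μ → ℕ) (hα : ∀ j, 0 < α j)
    (hM : M = (∑ j, α j) * mbar)
    (x : Fin M → Fin d → ℤ) (color : Fin M → Fin μ)
    (hx : ∀ i k, |x i k| ≤ (ζ : ℤ))
    (hcolor : ∀ j, (Finset.univ.filter fun i => color i = j).card = α j * mbar)
    (hsum : ∑ i, x i = 0)
    (hbig : (2 * d * ζ + 2 * μ * ζ + 1) ^ (d + μ) * (∑ j, α j) + (∑ j, α j) + d + μ < M) :
    ∃ m : ℕ, 0 < m ∧ m ≤ (2 * d * ζ + 2 * μ * ζ + 1) ^ (d + μ) ∧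
      ∃ T : Finset (Fin M),
        (∀ j, (T.filter fun i => color i = j).card = α j * m) ∧
        ∑ i ∈ T, x i = 0 := by
  classical
  set Atot : ℕ := ∑ j, α j with hAtot
  have hA0 : 0 < Atot := by
    rw [hAtot]
    exact Finset.sum_pos (fun j _ => hα j) ⟨⟨0, hμ⟩, Finset.mem_univ _⟩
  have hAQ : (0:ℚ) < (Atot:ℚ) := by exact_mod_cast hA0
  set K : ℕ := (2 * d * ζ + 2 * μ * ζ + 1) ^ (d + μ) with hK
  have hbig' : K * Atot + Atot + d + μ < M := hbig
  have hKM : Atot * K < M := by rw [Nat.mul_comm]; omega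
  have hζ1 : (1:ℚ) ≤ (ζ:ℚ) := by exact_mod_cast hζ
  have hζQ : (0:ℚ) ≤ (ζ:ℚ) := by linarith
  have hαA : ∀ j, (α j : ℚ) ≤ (Atot : ℚ) := by
    intro j
    have : α j ≤ Atot := by
      rw [hAtot]
      exact Finset.single_le_sum (fun j _ => Nat.zero_le _) (Finset.mem_univ j)
    exact_mod_cast this
  -- the augmented rational vectors
  set v : Fin M → (Fin d ⊕ Fin μ) → ℚ := fun i => Sum.elim (fun k => ((x i k : ℤ) : ℚ))
    (fun j => (if color i = j then (1:ℚ) else 0) - (α j : ℚ) / (Atot : ℚ)) with hv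
  have hb : ∀ i k, |v i k| ≤ (ζ:ℚ) := by
    intro i k
    cases k with
    | inl k =>
      simp only [hv, Sum.elim_inl]
      rw [← Int.cast_abs]
      exact_mod_cast hx i k
    | inr j =>
      simp only [hv, Sum.elim_inr]
      have h1 : (0:ℚ) ≤ (α j : ℚ) / (Atot : ℚ) := by positivity
      have h2 : (α j : ℚ) / (Atot : ℚ) ≤ 1 := by
        rw [div_le_one hAQ]; exact hαA j
      have : |(if color i = j then (1:ℚ) else 0) - (α j : ℚ) / (Atot : ℚ)| ≤ 1 := by
        rw [abs_le]
        split_ifs with h <;> constructor <;> linarith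
      linarith
  have h0 : ∀ k, ∑ i, v i k = 0 := by
    intro k
    cases k with
    | inl k =>
      simp only [hv, Sum.elim_inl]
      have : (∑ i, x i) k = 0 := by rw [hsum]; rfl
      rw [Finset.sum_apply] at this
      exact_mod_cast this
    | inr j =>
      simp only [hv, Sum.elim_inr]
      rw [Finset.sum_sub_distrib, Finset.sum_boole, hcolor j, Finset.sum_const,
        Finset.card_univ, Fintype.card_fin, nsmul_eq_mul, hM]
      push_cast
      field_simp
      ring
  obtain ⟨A, hsubA, hcard, hbound⟩ := steinitz_chain v (ζ:ℚ) hζQ hb h0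
  have hmono : ∀ s t, s ≤ t → A s ⊆ A t := fun s t h =>
    monotone_nat_of_le_succ (fun u => Finset.le_iff_subset.mpr (hsubA u)) h
  have hcardsum : Fintype.card (Fin d ⊕ Fin μ) = d + μ := by
    simp [Fintype.card_sum]
  -- counts
  set cnt : ℕ → Fin μ → ℕ := fun t j => ((A t).filter fun i => color i = j).card with hcnt
  set cN : ℕ := (d + μ) * ζ with hcN
  -- integral prefix vectors
  set G : ℕ → (Fin d ⊕ Fin μ) → ℤ := fun s => Sum.elim
    (fun k => ∑ i ∈ A (Atot * s), x i k)
    (fun j => (cnt (Atot * s) j : ℤ) - (s : ℤ) * (α j : ℤ)) with hG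
  have hcast : ∀ s, s ≤ K → ∀ k, ((G s k : ℤ) : ℚ) = ∑ i ∈ A (Atot * s), v i k := by
    intro s hs k
    have hts : Atot * s ≤ M := le_trans (Nat.mul_le_mul_left _ hs) hKM.le
    cases k with
    | inl k =>
      simp only [hG, Sum.elim_inl, hv]
      push_cast
      rfl
    | inr j =>
      simp only [hG, Sum.elim_inr, hv]
      rw [Finset.sum_sub_distrib, Finset.sum_boole, Finset.sum_const, nsmul_eq_mul,
        hcard _ hts]
      simp only [hcnt]
      push_cast
      field_simp
  have hGbox : ∀ s, s ≤ K → ∀ k, |G s k| ≤ (cN : ℤ) := by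
    intro s hs k
    have h1 : |((G s k : ℤ) : ℚ)| ≤ (cN : ℚ) := by
      rw [hcast s hs k]
      have := hbound (Atot * s) k
      rw [hcardsum] at this
      calc |∑ i ∈ A (Atot * s), v i k| ≤ ((d + μ : ℕ) : ℚ) * (ζ:ℚ) := this
        _ = (cN : ℚ) := by rw [hcN]; push_cast; ring
    rw [← Int.cast_abs] at h1
    exact_mod_cast h1
  -- pigeonhole
  have hbox : (0:ℤ) ≤ (cN:ℤ) := by positivity
  set f : Fin (K + 1) → ((Fin d ⊕ Fin μ) → ↥(Finset.Icc (-(cN:ℤ)) (cN:ℤ))) := fun s k =>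
    ⟨G s k, by
      rw [Finset.mem_Icc]
      have := hGbox s (Fin.is_le s) k
      rw [abs_le] at this
      exact this⟩ with hf
  have hcardIcc : Fintype.card ↥(Finset.Icc (-(cN:ℤ)) (cN:ℤ)) = 2 * cN + 1 := by
    rw [Fintype.card_coe, Int.card_Icc]
    omega
  have hcardfun : Fintype.card ((Fin d ⊕ Fin μ) → ↥(Finset.Icc (-(cN:ℤ)) (cN:ℤ))) = K := by
    rw [Fintype.card_fun, hcardIcc, hcardsum, hK, hcN]
    ring_nf
  have hccc : Fintype.card ((Fin d ⊕ Fin μ) → ↥(Finset.Icc (-(cN:ℤ)) (cN:ℤ)))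
      < Fintype.card (Fin (K + 1)) := by
    rw [hcardfun, Fintype.card_fin]
    omega
  obtain ⟨s1, s2, hne, hfeq⟩ := Fintype.exists_ne_map_eq_of_card_lt f hccc
  -- wlog s1 < s2
  wlog hlt : (s1 : ℕ) < (s2 : ℕ) generalizing s1 s2
  · have hne' : (s1:ℕ) ≠ (s2:ℕ) := fun h => hne (Fin.ext h)
    exact this s2 s1 hne.symm hfeq.symm (by omega)
  have hGeq : ∀ k, G s1 k = G s2 k := by
    intro k
    have := congrFun hfeq k
    exact Subtype.ext_iff.mp this
  refine ⟨(s2 : ℕ) - (s1 : ℕ), by omega, by have := Fin.is_le s2; omega, ?_⟩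
  have hts1 : Atot * (s1:ℕ) ≤ Atot * (s2:ℕ) := Nat.mul_le_mul_left _ hlt.le
  have hsub12 : A (Atot * (s1:ℕ)) ⊆ A (Atot * (s2:ℕ)) := hmono _ _ hts1
  refine ⟨A (Atot * (s2:ℕ)) \ A (Atot * (s1:ℕ)), ?_, ?_⟩
  · intro j
    have hfs : ((A (Atot * (s2:ℕ)) \ A (Atot * (s1:ℕ))).filter fun i => color i = j)
        = ((A (Atot * (s2:ℕ))).filter fun i => color i = j)
          \ ((A (Atot * (s1:ℕ))).filter fun i => color i = j) := by
      ext i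
      simp only [Finset.mem_sdiff, Finset.mem_filter]
      tauto
    rw [hfs, Finset.card_sdiff_of_subset (Finset.filter_subset_filter _ hsub12)]
    have hz := hGeq (Sum.inr j)
    simp only [hG, Sum.elim_inr] at hz
    have hle12 : cnt (Atot * (s1:ℕ)) j ≤ cnt (Atot * (s2:ℕ)) j := by
      have hmul : ((s1:ℕ) : ℤ) * (α j : ℤ) ≤ ((s2:ℕ) : ℤ) * (α j : ℤ) := by
        apply mul_le_mul_of_nonneg_right _ (by positivity)
        exact_mod_cast hlt.le
      have : ((cnt (Atot * (s1:ℕ)) j : ℕ) : ℤ) ≤ ((cnt (Atot * (s2:ℕ)) j : ℕ) : ℤ) := by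
        linarith
      exact_mod_cast this
    show cnt (Atot * (s2:ℕ)) j - cnt (Atot * (s1:ℕ)) j = α j * ((s2:ℕ) - (s1:ℕ))
    have hgoal : ((cnt (Atot * (s2:ℕ)) j : ℤ)) = (α j : ℤ) * (((s2:ℕ) : ℤ) - ((s1:ℕ) : ℤ))
        + (cnt (Atot * (s1:ℕ)) j : ℤ) := by linarith
    have hp : ((α j * ((s2:ℕ) - (s1:ℕ)) : ℕ) : ℤ)
        = (α j : ℤ) * (((s2:ℕ):ℤ) - ((s1:ℕ):ℤ)) := by
      push_cast [Nat.cast_sub hlt.le]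
      ring
    have hfin : ((cnt (Atot * (s2:ℕ)) j : ℤ))
        = ((α j * ((s2:ℕ) - (s1:ℕ)) : ℕ) : ℤ) + (cnt (Atot * (s1:ℕ)) j : ℤ) := by
      rw [hp]; linarith
    have : cnt (Atot * (s2:ℕ)) j = α j * ((s2:ℕ) - (s1:ℕ)) + cnt (Atot * (s1:ℕ)) j := by
      exact_mod_cast hfin
    omega
  · funext k
    rw [Finset.sum_apply, Finset.sum_sdiff_eq_sub hsub12]
    have hz := hGeq (Sum.inl k)
    simp only [hG, Sum.elim_inl] at hz
    simp [hz]
end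

section
/- Let ζ, m be positive integers and let x₁, x₂, …, x_m ∈ ℤ_{>0} satisfy x_i ≤ ζ for every i ∈ {1,…,m} and Σ_{i=1}^m x_i = x. If x is a multiple of (ζ+1)!, then {1,…,m} can be partitioned into m' = x/(ζ+1)! subsets T₁, …, T_{m'} such that Σ_{i∈T_k} x_i = (ζ+1)! for every k ∈ {1,…,m'}. -/
open Matrix

/-- Key lemma: if all values lie in `[1,v]`, `v! ∣ R` and `R + ((v+1)! - 1)` is at most the
total sum, then some subset sums exactly to `R`. -/
lemma subsetSum_of_small {ι : Type*} [DecidableEq ι] :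
    ∀ (v : ℕ) (s : Finset ι) (x : ι → ℕ), (∀ i ∈ s, 0 < x i ∧ x i ≤ v) →
    ∀ R : ℕ, Nat.factorial v ∣ R → R + (Nat.factorial (v+1) - 1) ≤ ∑ i ∈ s, x i →
    ∃ t ⊆ s, ∑ i ∈ t, x i = R := by
  intro v
  induction v with
  | zero =>
    intro s x hx R hdvd hle
    have hs : s = ∅ := by
      rw [Finset.eq_empty_iff_forall_notMem]
      intro i hi
      have := hx i hi
      omega
    subst hs
    simp only [Finset.sum_empty] at hle
    have hR : R = 0 := by
      have : Nat.factorial 1 = 1 := rfl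
      omega
    exact ⟨∅, Finset.Subset.refl _, by simp [hR]⟩
  | succ v ih =>
    intro s x hx R hdvd hle
    classical
    set s₁ := s.filter (fun i => x i = v+1) with hs₁
    set s' := s.filter (fun i => ¬ x i = v+1) with hs'
    set c := s₁.card with hc
    set T' := ∑ i ∈ s', x i with hT'
    have hsplit : ∑ i ∈ s, x i = c*(v+1) + T' := by
      rw [← Finset.sum_filter_add_sum_filter_not s (fun i => x i = v+1) x]
      congr 1
      have h1 : ∑ i ∈ s₁, x i = ∑ _i ∈ s₁, (v+1) :=
        Finset.sum_congr rfl (fun i hi => (Finset.mem_filter.mp hi).2)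
      rw [h1, Finset.sum_const, smul_eq_mul]
    set S := Nat.lcm (v+1) (Nat.factorial v) with hS
    have hv1S : (v+1) ∣ S := Nat.dvd_lcm_left _ _
    have hfS : Nat.factorial v ∣ S := Nat.dvd_lcm_right _ _
    have hSd : S ∣ Nat.factorial (v+1) := by
      apply Nat.lcm_dvd
      · exact Dvd.intro _ (Nat.factorial_succ v).symm
      · exact Nat.factorial_dvd_factorial (Nat.le_succ v)
    have hS0 : 0 < S := by
      rcases Nat.eq_zero_or_pos S with h | h
      · exfalso
        rw [h] at hSd
        have := Nat.factorial_pos (v+1)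
        omega
      · exact h
    have hSle : S ≤ Nat.factorial (v+1) := Nat.le_of_dvd (Nat.factorial_pos _) hSd
    have hSR : S ∣ R := hSd.trans hdvd
    set k := S / (v+1) with hk
    have hkS : k * (v+1) = S := Nat.div_mul_cancel hv1S
    have hk0 : 0 < k := by
      rcases Nat.eq_zero_or_pos k with h | h
      · rw [h] at hkS; omega
      · exact h
    by_cases hpure : R / S ≤ c / k
    · -- enough items of value v+1: take a pure block
      have h1 : (R/S) * k ≤ c := by
        calc (R/S) * k ≤ (c/k) * k := Nat.mul_le_mul_right _ hpure
          _ ≤ c := Nat.div_mul_le_self _ _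
      obtain ⟨u, hu, hcard⟩ := Finset.exists_subset_card_eq (s := s₁) (n := (R/S)*k) h1
      refine ⟨u, hu.trans (Finset.filter_subset _ _), ?_⟩
      have hxu : ∑ i ∈ u, x i = u.card * (v+1) := by
        have h2 : ∑ i ∈ u, x i = ∑ _i ∈ u, (v+1) :=
          Finset.sum_congr rfl (fun i hi => (Finset.mem_filter.mp (hu hi)).2)
        rw [h2, Finset.sum_const, smul_eq_mul]
      rw [hxu, hcard, mul_assoc, hkS]
      exact Nat.div_mul_cancel hSR
    · push_neg at hpure
      set m := c / k with hm
      have hmRS : m ≤ R / S := Nat.le_of_lt hpure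
      have hmSR : m * S ≤ R := by
        calc m * S ≤ (R/S) * S := Nat.mul_le_mul_right _ hmRS
          _ ≤ R := Nat.div_mul_le_self _ _
      have hPm : R + (Nat.factorial (v+1) - 1) ≤ m * S + T' := by
        by_contra hnP
        push_neg at hnP
        have hcm : c < k * m + k := by
          have h1 : k * m + c % k = c := by rw [hm]; exact Nat.div_add_mod c k
          have h2 := Nat.mod_lt c hk0
          omega
        have h3 : c * (v+1) < m * S + S := by
          calc c * (v+1) < (k*m + k)*(v+1) := (Nat.mul_lt_mul_right (Nat.succ_pos v)).mpr hcm
            _ = m * (k*(v+1)) + k*(v+1) := by ring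
            _ = m * S + S := by rw [hkS]
        have h4 : 2 * Nat.factorial (v+1) ≤ Nat.factorial (v+1+1) := by
          rw [Nat.factorial_succ (v+1)]
          exact Nat.mul_le_mul_right _ (by omega)
        have h5 := Nat.factorial_pos (v+1)
        have h6 : R + (Nat.factorial (v+1+1) - 1) ≤ c*(v+1) + T' := hsplit ▸ hle
        omega
      have hx' : ∀ i ∈ s', 0 < x i ∧ x i ≤ v := by
        intro i hi
        have h1 := hx i (Finset.filter_subset _ _ hi)
        have h2 := (Finset.mem_filter.mp hi).2
        omega
      have hdvd' : Nat.factorial v ∣ R - m * S :=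
        Nat.dvd_sub ((Nat.factorial_dvd_factorial (Nat.le_succ v)).trans hdvd)
          (hfS.mul_left m)
      have hle' : (R - m*S) + (Nat.factorial (v+1) - 1) ≤ T' := by omega
      obtain ⟨t', ht's, ht'sum⟩ := ih s' x hx' (R - m*S) hdvd' hle'
      have hmk : m * k ≤ c := by
        rw [hm]
        exact Nat.div_mul_le_self _ _
      obtain ⟨u, hu, hucard⟩ := Finset.exists_subset_card_eq (s := s₁) (n := m*k) hmk
      have husum : ∑ i ∈ u, x i = m * S := by
        have h2 : ∑ i ∈ u, x i = ∑ _i ∈ u, (v+1) :=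
          Finset.sum_congr rfl (fun i hi => (Finset.mem_filter.mp (hu hi)).2)
        rw [h2, Finset.sum_const, smul_eq_mul, hucard, mul_assoc, hkS]
      have hdisj : Disjoint u t' := by
        rw [Finset.disjoint_left]
        intro i hiu hit'
        have h1 : x i = v+1 := (Finset.mem_filter.mp (hu hiu)).2
        have h2 : ¬ x i = v+1 := (Finset.mem_filter.mp (ht's hit')).2
        exact h2 h1
      refine ⟨u ∪ t', ?_, ?_⟩
      · exact Finset.union_subset (hu.trans (Finset.filter_subset _ _))
          (ht's.trans (Finset.filter_subset _ _))
      · rw [Finset.sum_union hdisj, husum, ht'sum]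
        omega

/-- Partition lemma: values in `[1,ζ]` with sum `k·(ζ+1)!` can be labelled by
`{0,…,k-1}` so that each label class sums to `(ζ+1)!`. -/
lemma partition_of_small {ι : Type*} [DecidableEq ι] (ζ : ℕ) :
    ∀ (k : ℕ) (s : Finset ι) (x : ι → ℕ), (∀ i ∈ s, 0 < x i ∧ x i ≤ ζ) →
    ∑ i ∈ s, x i = k * Nat.factorial (ζ+1) →
    ∃ f : ι → ℕ, (∀ i ∈ s, f i < k) ∧
      ∀ j < k, ∑ i ∈ s.filter (fun i => f i = j), x i = Nat.factorial (ζ+1) := by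
  intro k
  induction k with
  | zero =>
    intro s x hx hsum
    have hs : s = ∅ := by
      rw [Finset.eq_empty_iff_forall_notMem]
      intro i hi
      have h1 := (hx i hi).1
      have h2 : x i = 0 := by
        have h3 : ∀ j ∈ s, x j = 0 := by
          rw [← Finset.sum_eq_zero_iff]
          simpa using hsum
        exact h3 i hi
      omega
    exact ⟨fun _ => 0, by simp [hs], by omega⟩
  | succ k ihk =>
    intro s x hx hsum
    classical
    rcases Nat.eq_zero_or_pos k with hk0 | hkpos
    · subst hk0
      refine ⟨fun _ => 0, fun i _ => Nat.zero_lt_one, ?_⟩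
      intro j hj
      have hj0 : j = 0 := by omega
      subst hj0
      have : s.filter (fun i => (0:ℕ) = 0) = s := by simp
      rw [this]
      simpa using hsum
    · have hGpos := Nat.factorial_pos (ζ+1)
      have hdvdG : Nat.factorial ζ ∣ Nat.factorial (ζ+1) :=
        Nat.factorial_dvd_factorial (Nat.le_succ ζ)
      have hle : Nat.factorial (ζ+1) + (Nat.factorial (ζ+1) - 1) ≤ ∑ i ∈ s, x i := by
        rw [hsum]
        have h1 : (k+1) * Nat.factorial (ζ+1)
            = k * Nat.factorial (ζ+1) + Nat.factorial (ζ+1) := by ring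
        have h2 : Nat.factorial (ζ+1) ≤ k * Nat.factorial (ζ+1) :=
          Nat.le_mul_of_pos_left _ hkpos
        omega
      obtain ⟨t, hts, htsum⟩ := subsetSum_of_small ζ s x hx (Nat.factorial (ζ+1)) hdvdG hle
      have hsum' : ∑ i ∈ s \ t, x i = k * Nat.factorial (ζ+1) := by
        have h1 := Finset.sum_sdiff (f := x) hts
        have h2 : (k+1) * Nat.factorial (ζ+1)
            = k * Nat.factorial (ζ+1) + Nat.factorial (ζ+1) := by ring
        omega
      obtain ⟨f', hf'1, hf'2⟩ := ihk (s \ t) x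
        (fun i hi => hx i (Finset.sdiff_subset hi)) hsum'
      refine ⟨fun i => if i ∈ t then k else f' i, ?_, ?_⟩
      · intro i hi
        by_cases h : i ∈ t
        · simp [h]
        · have := hf'1 i (Finset.mem_sdiff.mpr ⟨hi, h⟩)
          simp only [h, if_false]
          omega
      · intro j hj
        rcases eq_or_lt_of_le (Nat.lt_succ_iff.mp hj) with hjk | hjk
        · subst hjk
          have heq : s.filter (fun i => (if i ∈ t then j else f' i) = j) = t := by
            ext i
            simp only [Finset.mem_filter]
            constructor
            · rintro ⟨hi, hcond⟩
              by_cases h : i ∈ t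
              · exact h
              · exfalso
                simp only [h, if_false] at hcond
                have := hf'1 i (Finset.mem_sdiff.mpr ⟨hi, h⟩)
                omega
            · intro h
              exact ⟨hts h, by simp [h]⟩
          rw [heq]
          exact htsum
        · have heq : s.filter (fun i => (if i ∈ t then k else f' i) = j)
              = (s \ t).filter (fun i => f' i = j) := by
            ext i
            simp only [Finset.mem_filter, Finset.mem_sdiff]
            constructor
            · rintro ⟨hi, hcond⟩
              by_cases h : i ∈ t
              · simp only [h, if_true] at hcond; omega
              · simp only [h, if_false] at hcond
                exact ⟨⟨hi, h⟩, hcond⟩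
            · rintro ⟨⟨hi, hit⟩, hcond⟩
              exact ⟨hi, by simp [hit, hcond]⟩
          rw [heq]
          exact hf'2 j hjk

/-- positive integers `x₁,…,x_m ≤ ζ` whose sum is a multiple of `(ζ+1)!`
can be partitioned into `(∑ x_i)/(ζ+1)!` subsets each summing to `(ζ+1)!`. -/
theorem stmt6 (ζ m : ℕ) (hζ : 0 < ζ) (hm : 0 < m)
    (x : Fin m → ℕ) (hpos : ∀ i, 0 < x i) (hub : ∀ i, x i ≤ ζ)
    (hdvd : Nat.factorial (ζ + 1) ∣ ∑ i, x i) :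
    ∃ T : Fin ((∑ i, x i) / Nat.factorial (ζ + 1)) → Finset (Fin m),
      (∀ k l, k ≠ l → Disjoint (T k) (T l)) ∧
      (∀ i, ∃ k, i ∈ T k) ∧
      (∀ k, ∑ i ∈ T k, x i = Nat.factorial (ζ + 1)) := by
  classical
  set G := Nat.factorial (ζ + 1) with hG
  set k := (∑ i, x i) / G with hk
  have hsum : ∑ i ∈ Finset.univ, x i = k * G := (Nat.div_mul_cancel hdvd).symm
  obtain ⟨f, hf1, hf2⟩ := partition_of_small ζ k Finset.univ x
    (fun i _ => ⟨hpos i, hub i⟩) hsum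
  refine ⟨fun j => Finset.univ.filter (fun i => f i = j.val), ?_, ?_, ?_⟩
  · intro a b hab
    rw [Finset.disjoint_left]
    intro i h1 h2
    have h1' : f i = a.val := (Finset.mem_filter.mp h1).2
    have h2' : f i = b.val := (Finset.mem_filter.mp h2).2
    exact hab (Fin.ext (h1' ▸ h2'))
  · intro i
    have hi := hf1 i (Finset.mem_univ i)
    exact ⟨⟨f i, hi⟩, Finset.mem_filter.mpr ⟨Finset.mem_univ i, rfl⟩⟩
  · intro j
    exact hf2 j.val j.isLt
end

section
/- Let ζ ∈ ℤ_{>0} and let x₁, x₂, …, x_m ∈ ℤ with |x_i| ≤ ζ for every i ∈ {1,…,m} and Σ_{i=1}^m x_i = x. If x is a multiple of (6ζ² + 2ζ + 1)!, then {1,…,m} can be partitioned into m' subsets T₁, …, T_{m'} such that for every k ∈ {1,…,m'}: |T_k| ≤ (6ζ² + 2ζ + 1)!·(6ζ + 2) (which is 2^{O(ζ² log ζ)}), and Σ_{i∈T_k} x_i ∈ {0, sgn(x)·(6ζ² + 2ζ + 1)!}, where sgn(x) = 1 if x > 0, sgn(x) = -1 if x < 0, and sgn(x) = 0 if x = 0.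 -/
open Matrix

lemma lemmaE {m : ℕ} (x : Fin m → ℤ) :
    ∀ (v : ℕ) (u : Finset (Fin m)) (t : ℕ),
      (∀ i ∈ u, 1 ≤ x i ∧ x i ≤ (v : ℤ)) →
      (Nat.factorial v ∣ t) →
      ((t : ℤ) + v * Nat.factorial v ≤ ∑ i ∈ u, x i) →
      ∃ T ⊆ u, ∑ i ∈ T, x i = (t : ℤ) := by
  intro v
  induction v with
  | zero =>
    intro u t hb _ hsum
    have hu : u = ∅ := by
      by_contra h
      obtain ⟨i, hi⟩ := Finset.nonempty_of_ne_empty h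
      have := hb i hi
      push_cast at this
      omega
    subst hu
    simp at hsum
    have ht : t = 0 := by omega
    exact ⟨∅, by simp, by simp [ht]⟩
  | succ v ih =>
    intro u t hb hdvd hsum
    classical
    set W : Finset (Fin m) := u.filter (fun i => x i = ((v : ℤ) + 1)) with hW
    have hWu : W ⊆ u := Finset.filter_subset _ _
    set n := W.card with hn
    have hWsum : ∑ i ∈ W, x i = (n : ℤ) * ((v:ℤ)+1) := by
      rw [Finset.sum_congr rfl (fun i hi => (Finset.mem_filter.mp hi).2)]
      rw [Finset.sum_const, nsmul_eq_mul]
    have hvd1 : (v+1) ∣ t := dvd_trans (Nat.dvd_factorial (Nat.succ_pos v) le_rfl) hdvd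
    by_cases h1 : t ≤ (v+1) * n
    · -- take t/(v+1) copies of v+1
      set d := t / (v+1) with hd
      have hdt : d * (v+1) = t := Nat.div_mul_cancel hvd1
      have h2 : (v+1)*d ≤ (v+1)*n := by rw [mul_comm (v+1) d, hdt]; exact h1
      have hdn : d ≤ n := Nat.le_of_mul_le_mul_left h2 (Nat.succ_pos v)
      obtain ⟨T, hTW, hTcard⟩ := Finset.exists_subset_card_eq (hdn.trans hn.ge)
      refine ⟨T, hTW.trans hWu, ?_⟩
      have : ∑ i ∈ T, x i = (T.card : ℤ) * ((v:ℤ)+1) := by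
        rw [Finset.sum_congr rfl (fun i hi => (Finset.mem_filter.mp (hTW hi)).2)]
        simp
      rw [this, hTcard]
      push_cast [← hdt]
      ring
    · -- use k = v! * (n / v!) copies of v+1, recurse on u \ W
      push_neg at h1
      set f := Nat.factorial v with hf
      have hfpos : 0 < f := Nat.factorial_pos v
      set k := f * (n / f) with hk
      have hkn : k ≤ n := by rw [hk, mul_comm]; exact Nat.div_mul_le_self n f
      have hnk : n - k < f := by
        have h := Nat.mod_add_div n f
        have h2 := Nat.mod_lt n hfpos
        omega
      -- pick K ⊆ W with card k
      obtain ⟨K, hKW, hKcard⟩ := Finset.exists_subset_card_eq (hkn.trans hn.ge)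
      set u' := u \ W with hu'
      have hb' : ∀ i ∈ u', 1 ≤ x i ∧ x i ≤ (v : ℤ) := by
        intro i hi
        obtain ⟨hiu, hiW⟩ := Finset.mem_sdiff.mp hi
        have h3 := hb i hiu
        have h4 : x i ≠ (v:ℤ)+1 := by
          intro hc
          exact hiW (Finset.mem_filter.mpr ⟨hiu, hc⟩)
        push_cast at h3
        constructor
        · exact h3.1
        · have : x i < (v:ℤ)+1 := lt_of_le_of_ne (by linarith [h3.2]) h4
          omega
      have hkt : (v+1)*k ≤ t := le_of_lt (lt_of_le_of_lt (Nat.mul_le_mul_left _ hkn) h1)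
      set t' := t - (v+1)*k with ht'
      have ht'eq : t' + (v+1)*k = t := Nat.sub_add_cancel hkt
      have hdvd' : f ∣ t' := by
        have d1 : f ∣ t := dvd_trans (Nat.factorial_dvd_factorial (Nat.le_succ v)) hdvd
        have d2 : f ∣ (v+1)*k := ⟨(v+1)*(n/f), by rw [hk]; ring⟩
        exact (Nat.dvd_sub d1 d2)
      have hsum' : (t' : ℤ) + v * f ≤ ∑ i ∈ u', x i := by
        have hsplit : ∑ i ∈ u', x i = (∑ i ∈ u, x i) - ∑ i ∈ W, x i := by
          rw [hu', Finset.sum_sdiff_eq_sub hWu]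
        rw [hsplit, hWsum]
        have hfact : ((v+1).factorial : ℤ) = ((v:ℤ)+1) * f := by
          rw [Nat.factorial_succ]; push_cast; ring
        have hc1 : (t' : ℤ) = (t:ℤ) - ((v:ℤ)+1)*k := by
          have := ht'eq
          push_cast [← this]
          ring
        rw [hc1]
        have hnkz : (n : ℤ) - k ≤ (f:ℤ) - 1 := by
          have : (n - k : ℕ) ≤ f - 1 := by omega
          push_cast
          omega
        have hp : ((v:ℤ)+1) * ((n:ℤ)-(k:ℤ)) ≤ ((v:ℤ)+1) * ((f:ℤ)-1) := by
          apply mul_le_mul_of_nonneg_left _ (by positivity)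
          linarith [hnkz]
        have h5 : ((v:ℤ)+1) * (((v+1).factorial:ℤ)) = ((v:ℤ)+1)*((v:ℤ)+1)*(f:ℤ) := by
          rw [hfact]; ring
        have hfz : (1:ℤ) ≤ (f:ℤ) := by exact_mod_cast hfpos
        have h6 : (0:ℤ) ≤ (v:ℤ)*(v:ℤ)*(f:ℤ) := by positivity
        push_cast at hsum ⊢
        nlinarith [hsum, hp, h5, hfz, h6]
      obtain ⟨T', hT'u', hT'sum⟩ := ih u' t' hb' hdvd' hsum'
      have hdisj : Disjoint K T' := by
        have : T' ⊆ u \ W := hT'u'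
        exact Finset.disjoint_left.mpr (fun a haK haT => (Finset.mem_sdiff.mp (this haT)).2 (hKW haK))
      refine ⟨K ∪ T', Finset.union_subset (hKW.trans hWu) (hT'u'.trans (Finset.sdiff_subset)), ?_⟩
      rw [Finset.sum_union hdisj, hT'sum]
      have hKsum : ∑ i ∈ K, x i = (k : ℤ) * ((v:ℤ)+1) := by
        rw [Finset.sum_congr rfl (fun i hi => (Finset.mem_filter.mp (hKW hi)).2),
          Finset.sum_const, hKcard, nsmul_eq_mul]
      rw [hKsum]
      push_cast [← ht'eq]
      ring


lemma extend_partition {m : ℕ} (x : Fin m → ℤ) (F bd : ℕ) {s B : Finset (Fin m)}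
    {P' : Finset (Finset (Fin m))}
    (hBs : B ⊆ s)
    (hP1 : ∀ b ∈ P', b ⊆ s \ B)
    (hP2 : ∀ b ∈ P', ∀ c ∈ P', b ≠ c → Disjoint b c)
    (hP3 : P'.biUnion id = s \ B)
    (hP4 : ∀ b ∈ P', b.card ≤ bd ∧ (∑ i ∈ b, x i = 0 ∨
        (∑ i ∈ b, x i = (F:ℤ) ∧ 0 < ∑ i ∈ s \ B, x i)))
    (hBcard : B.card ≤ bd)
    (hBsum : ∑ i ∈ B, x i = 0 ∨ (∑ i ∈ B, x i = (F:ℤ) ∧ 0 < ∑ i ∈ s, x i))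
    (hmono : 0 ≤ ∑ i ∈ B, x i) :
    ∃ P : Finset (Finset (Fin m)), (∀ b ∈ P, b ⊆ s) ∧
      (∀ b ∈ P, ∀ c ∈ P, b ≠ c → Disjoint b c) ∧ P.biUnion id = s ∧
      (∀ b ∈ P, b.card ≤ bd ∧ (∑ i ∈ b, x i = 0 ∨
        (∑ i ∈ b, x i = (F:ℤ) ∧ 0 < ∑ i ∈ s, x i))) := by
  classical
  have hsplit : ∑ i ∈ s \ B, x i = ∑ i ∈ s, x i - ∑ i ∈ B, x i :=
    Finset.sum_sdiff_eq_sub hBs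
  have hdisjB : ∀ b ∈ P', Disjoint B b := by
    intro b hb
    exact Finset.disjoint_right.mpr (fun a ha => (Finset.mem_sdiff.mp (hP1 b hb ha)).2)
  refine ⟨insert B P', ?_, ?_, ?_, ?_⟩
  · intro b hb
    rcases Finset.mem_insert.mp hb with h | h
    · exact h ▸ hBs
    · exact (hP1 b h).trans (Finset.sdiff_subset)
  · intro b hb c hc hbc
    rcases Finset.mem_insert.mp hb with h | h <;> rcases Finset.mem_insert.mp hc with h' | h'
    · exact absurd (h.trans h'.symm) hbc
    · exact h ▸ hdisjB c h'
    · exact h' ▸ (hdisjB b h).symm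
    · exact hP2 b h c h' hbc
  · rw [Finset.biUnion_insert, hP3]
    simp only [id]
    exact Finset.union_sdiff_of_subset hBs
  · intro b hb
    rcases Finset.mem_insert.mp hb with h | h
    · subst h
      exact ⟨hBcard, hBsum⟩
    · refine ⟨(hP4 b h).1, ?_⟩
      rcases (hP4 b h).2 with h0 | ⟨hF, hpos⟩
      · exact Or.inl h0
      · exact Or.inr ⟨hF, by linarith [hsplit, hmono, hpos]⟩

lemma thin_bound {m : ℕ} (ζ : ℕ) (hζ : 0 < ζ) (x : Fin m → ℤ) (s : Finset (Fin m))
    (hub : ∀ i, |x i| ≤ (ζ:ℤ)) (hnz : ∀ i ∈ s, x i ≠ 0)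
    (hS : ∑ i ∈ s, x i = 0)
    (hthin : ∀ a ∈ Finset.Icc 1 ζ, (s.filter (fun i => x i = (a:ℤ))).card < ζ) :
    s.card ≤ 2 * ζ^3 := by
  classical
  set pos := s.filter (fun i => 0 < x i) with hpos
  set neg := s.filter (fun i => x i < 0) with hneg
  have hcard : s.card = pos.card + neg.card := by
    rw [hpos, hneg, ← Finset.card_union_of_disjoint]
    · congr 1
      ext i
      simp only [Finset.mem_union, Finset.mem_filter]
      constructor
      · intro hi
        rcases lt_trichotomy (x i) 0 with h | h | h
        · exact Or.inr ⟨hi, h⟩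
        · exact absurd h (hnz i hi)
        · exact Or.inl ⟨hi, h⟩
      · rintro (⟨hi, _⟩ | ⟨hi, _⟩) <;> exact hi
    · rw [Finset.disjoint_left]
      rintro a ha hb
      have h1 := (Finset.mem_filter.mp ha).2
      have h2 := (Finset.mem_filter.mp hb).2
      linarith
  have hposcard : pos.card ≤ ζ * ζ := by
    have hsub : pos ⊆ (Finset.Icc 1 ζ).biUnion (fun a => s.filter (fun i => x i = (a:ℤ))) := by
      intro i hi
      obtain ⟨hi1, hi2⟩ := Finset.mem_filter.mp hi
      rw [Finset.mem_biUnion]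
      refine ⟨(x i).toNat, ?_, ?_⟩
      · rw [Finset.mem_Icc]
        have := hub i
        rw [abs_le] at this
        constructor
        · omega
        · have : (x i) ≤ (ζ:ℤ) := this.2
          omega
      · rw [Finset.mem_filter]
        exact ⟨hi1, by omega⟩
    calc pos.card ≤ _ := Finset.card_le_card hsub
      _ ≤ ∑ a ∈ Finset.Icc 1 ζ, (s.filter (fun i => x i = (a:ℤ))).card :=
          Finset.card_biUnion_le
      _ ≤ ∑ a ∈ Finset.Icc 1 ζ, ζ := Finset.sum_le_sum (fun a ha => le_of_lt (hthin a ha))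
      _ = ζ * ζ := by simp [Nat.card_Icc, mul_comm]
  have hPsum : ∑ i ∈ pos, x i ≤ (ζ:ℤ) * pos.card := by
    calc ∑ i ∈ pos, x i ≤ ∑ i ∈ pos, (ζ:ℤ) := by
          apply Finset.sum_le_sum
          intro i _
          have := hub i
          rw [abs_le] at this
          exact this.2
      _ = (ζ:ℤ) * pos.card := by rw [Finset.sum_const, nsmul_eq_mul, mul_comm]
  have hnegsum : ∑ i ∈ neg, (-x i) = ∑ i ∈ pos, x i := by
    have : ∑ i ∈ s, x i = ∑ i ∈ pos, x i + ∑ i ∈ neg, x i := by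
      rw [hpos, hneg, ← Finset.sum_filter_add_sum_filter_not s (fun i => 0 < x i)]
      congr 1
      apply Finset.sum_congr
      · ext i
        simp only [Finset.mem_filter, not_lt]
        exact and_congr_right fun hi => ⟨fun h => lt_of_le_of_ne h (hnz i hi), le_of_lt⟩
      · intros; rfl
    rw [hS] at this
    rw [Finset.sum_neg_distrib]
    linarith
  have hnegcard : (neg.card : ℤ) ≤ ∑ i ∈ neg, (-x i) := by
    calc (neg.card : ℤ) = ∑ _i ∈ neg, (1:ℤ) := by rw [Finset.sum_const, nsmul_eq_mul, mul_one]
      _ ≤ ∑ i ∈ neg, (-x i) := by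
          apply Finset.sum_le_sum
          intro i hi
          have := (Finset.mem_filter.mp hi).2
          omega
  have hfinal : (neg.card : ℤ) ≤ (ζ:ℤ) * (ζ * ζ) := by
    calc (neg.card : ℤ) ≤ ∑ i ∈ neg, (-x i) := hnegcard
      _ = ∑ i ∈ pos, x i := hnegsum
      _ ≤ (ζ:ℤ) * pos.card := hPsum
      _ ≤ (ζ:ℤ) * (ζ*ζ) := by
          apply mul_le_mul_of_nonneg_left _ (by positivity)
          exact_mod_cast hposcard
  have h2 : neg.card ≤ ζ^3 := by
    have : (neg.card : ℤ) ≤ ((ζ^3 : ℕ) : ℤ) := by push_cast; linarith [hfinal]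
    exact_mod_cast this
  have h3 : ζ * ζ ≤ ζ^3 := by nlinarith
  omega


lemma mainPart (ζ : ℕ) (hζ : 0 < ζ) {m : ℕ} (x : Fin m → ℤ) (hub : ∀ i, |x i| ≤ (ζ:ℤ)) :
    ∀ (n : ℕ) (s : Finset (Fin m)), s.card ≤ n →
      (0:ℤ) ≤ ∑ i ∈ s, x i →
      ((Nat.factorial (6*ζ^2+2*ζ+1) : ℤ)) ∣ ∑ i ∈ s, x i →
      ∃ P : Finset (Finset (Fin m)),
        (∀ b ∈ P, b ⊆ s) ∧
        (∀ b ∈ P, ∀ c ∈ P, b ≠ c → Disjoint b c) ∧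
        P.biUnion id = s ∧
        (∀ b ∈ P, b.card ≤ (Nat.factorial (6*ζ^2+2*ζ+1)) * (6*ζ+2) ∧
          (∑ i ∈ b, x i = 0 ∨ (∑ i ∈ b, x i = ((Nat.factorial (6*ζ^2+2*ζ+1) : ℤ))
            ∧ 0 < ∑ i ∈ s, x i))) := by
  classical
  set F : ℕ := Nat.factorial (6*ζ^2+2*ζ+1) with hF
  set bd : ℕ := F * (6*ζ+2) with hbd
  have hFpos : 0 < F := Nat.factorial_pos _
  have hzf : ζ * Nat.factorial ζ < F := by
    calc ζ * Nat.factorial ζ < (ζ+1) * Nat.factorial ζ := by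
          apply Nat.mul_lt_mul_of_lt_of_le (Nat.lt_succ_self ζ) le_rfl (Nat.factorial_pos ζ)
      _ = Nat.factorial (ζ+1) := (Nat.factorial_succ ζ).symm
      _ ≤ F := Nat.factorial_le (by nlinarith)
  intro n
  induction n with
  | zero =>
    intro s hcard _ _
    have hs : s = ∅ := Finset.card_eq_zero.mp (Nat.le_zero.mp hcard)
    subst hs
    exact ⟨∅, by simp, by simp, by simp, by simp⟩
  | succ n IH =>
    intro s hcard hS0 hSdvd
    by_cases hempty : s = ∅
    · subst hempty
      exact ⟨∅, by simp, by simp, by simp, by simp⟩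
    -- case: some zero element
    by_cases hz : ∃ i ∈ s, x i = 0
    · obtain ⟨i, his, hxi⟩ := hz
      have hBs : {i} ⊆ s := Finset.singleton_subset_iff.mpr his
      have hsum' : ∑ j ∈ s \ {i}, x j = ∑ j ∈ s, x j := by
        rw [Finset.sum_sdiff_eq_sub hBs]
        simp [hxi]
      have hcard' : (s \ {i}).card ≤ n := by
        rw [Finset.card_sdiff_of_subset hBs]
        simp only [Finset.card_singleton]
        have : 0 < s.card := Finset.card_pos.mpr (Finset.nonempty_of_ne_empty hempty)
        omega
      obtain ⟨P', hP1, hP2, hP3, hP4⟩ := IH (s \ {i}) hcard' (hsum' ▸ hS0) (hsum' ▸ hSdvd)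
      refine extend_partition x F bd hBs hP1 hP2 hP3 ?_ ?_ ?_ ?_
      · intro b hb
        refine ⟨(hP4 b hb).1, ?_⟩
        rcases (hP4 b hb).2 with h | ⟨h1, h2⟩
        · exact Or.inl h
        · exact Or.inr ⟨h1, h2⟩
      · simpa using Nat.one_le_iff_ne_zero.mpr (by positivity)
      · left; simp [hxi]
      · simp [hxi]
    push_neg at hz
    by_cases hSz : ∑ i ∈ s, x i = 0
    · -- zero-sum case
      by_cases hrich : (∃ a ∈ Finset.Icc 1 ζ, ζ ≤ (s.filter (fun i => x i = (a:ℤ))).card) ∧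
          (∃ b ∈ Finset.Icc 1 ζ, ζ ≤ (s.filter (fun i => x i = -(b:ℤ))).card)
      · obtain ⟨⟨a, ha, hacard⟩, ⟨b, hb, hbcard⟩⟩ := hrich
        rw [Finset.mem_Icc] at ha hb
        obtain ⟨Ta, hTa, hTacard⟩ := Finset.exists_subset_card_eq (le_trans hb.2 hacard)
        obtain ⟨Tb, hTb, hTbcard⟩ := Finset.exists_subset_card_eq (le_trans ha.2 hbcard)
        have hTaval : ∀ i ∈ Ta, x i = (a:ℤ) := fun i hi => (Finset.mem_filter.mp (hTa hi)).2
        have hTbval : ∀ i ∈ Tb, x i = -(b:ℤ) := fun i hi => (Finset.mem_filter.mp (hTb hi)).2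
        have hdisjab : Disjoint Ta Tb := by
          rw [Finset.disjoint_left]
          intro i hia hib
          have h1 := hTaval i hia
          have h2 := hTbval i hib
          have : (1:ℤ) ≤ a := by exact_mod_cast ha.1
          have : (1:ℤ) ≤ b := by exact_mod_cast hb.1
          omega
        set B := Ta ∪ Tb with hB
        have hBs : B ⊆ s := Finset.union_subset
          (hTa.trans (Finset.filter_subset _ _)) (hTb.trans (Finset.filter_subset _ _))
        have hBsum0 : ∑ i ∈ B, x i = 0 := by
          rw [hB, Finset.sum_union hdisjab]
          rw [Finset.sum_congr rfl hTaval, Finset.sum_congr rfl hTbval]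
          rw [Finset.sum_const, Finset.sum_const, hTacard, hTbcard]
          push_cast
          ring
        have hBne : B.Nonempty := by
          rw [hB]
          apply Finset.Nonempty.mono Finset.subset_union_left
          rw [← Finset.card_pos, hTacard]
          omega
        have hsum' : ∑ j ∈ s \ B, x j = ∑ j ∈ s, x j := by
          rw [Finset.sum_sdiff_eq_sub hBs, hBsum0]
          ring
        have hcard' : (s \ B).card ≤ n := by
          rw [Finset.card_sdiff_of_subset hBs]
          have h1 : 0 < B.card := Finset.card_pos.mpr hBne
          have h2 : B.card ≤ s.card := Finset.card_le_card hBs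
          omega
        obtain ⟨P', hP1, hP2, hP3, hP4⟩ := IH (s \ B) hcard' (hsum' ▸ hS0) (hsum' ▸ hSdvd)
        refine extend_partition x F bd hBs hP1 hP2 hP3 hP4 ?_ (Or.inl hBsum0) (le_of_eq hBsum0.symm)
        · rw [hB]
          calc (Ta ∪ Tb).card ≤ Ta.card + Tb.card := Finset.card_union_le _ _
            _ = b + a := by rw [hTacard, hTbcard]
            _ ≤ 2 * ζ := by omega
            _ ≤ bd := by
                rw [hbd]
                calc 2*ζ ≤ 6*ζ+2 := by omega
                  _ ≤ F * (6*ζ+2) := Nat.le_mul_of_pos_left _ hFpos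
      · -- thin case: whole set is one block
        refine ⟨{s}, by simp, by simp, by simp, ?_⟩
        intro b hb
        rw [Finset.mem_singleton] at hb
        rw [hb]
        refine ⟨?_, Or.inl hSz⟩
        have hsb : s.card ≤ 2 * ζ^3 := by
          rw [not_and_or] at hrich
          rcases hrich with h | h
          · push_neg at h
            exact thin_bound ζ hζ x s hub hz hSz h
          · push_neg at h
            have filt_eq : ∀ a : ℕ, s.filter (fun i => -x i = (a:ℤ))
                = s.filter (fun i => x i = -(a:ℤ)) := by
              intro a
              apply Finset.filter_congr
              intro i _
              constructor
              · intro hh; omega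
              · intro hh; omega
            exact thin_bound ζ hζ (fun i => - x i) s (by intro i; rw [abs_neg]; exact hub i)
              (fun i hi => neg_ne_zero.mpr (hz i hi))
              (by rw [Finset.sum_neg_distrib, hSz]; ring)
              (fun a ha => by rw [filt_eq a]; exact h a ha)
        calc s.card ≤ 2*ζ^3 := hsb
          _ ≤ bd := by
            rw [hbd]
            have h1 : 6*ζ^2+2*ζ+1 ≤ F := Nat.self_le_factorial _
            nlinarith
    · -- positive sum case
      have hSpos : 0 < ∑ i ∈ s, x i := lt_of_le_of_ne hS0 (Ne.symm hSz)
      have hFS : (F:ℤ) ≤ ∑ i ∈ s, x i := Int.le_of_dvd hSpos hSdvd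
      set pos := s.filter (fun i => 0 < x i) with hpos
      have hposb : ∀ i ∈ pos, 1 ≤ x i ∧ x i ≤ (ζ:ℤ) := by
        intro i hi
        obtain ⟨hi1, hi2⟩ := Finset.mem_filter.mp hi
        have := hub i
        rw [abs_le] at this
        exact ⟨by omega, this.2⟩
      have hSP : ∑ i ∈ s, x i ≤ ∑ i ∈ pos, x i := by
        have hsplit := Finset.sum_filter_add_sum_filter_not s (fun i => 0 < x i) x
        have hnonpos : ∑ i ∈ s.filter (fun i => ¬ 0 < x i), x i ≤ 0 := by
          apply Finset.sum_nonpos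
          intro i hi
          have := (Finset.mem_filter.mp hi).2
          linarith [not_lt.mp this]
        rw [hpos]
        linarith
      by_cases hbig : (F:ℤ) + ζ * Nat.factorial ζ ≤ ∑ i ∈ pos, x i
      · -- extract an F-block via lemmaE
        obtain ⟨T, hTpos, hTsum⟩ := lemmaE x ζ pos F hposb
          (Nat.factorial_dvd_factorial (by nlinarith)) hbig
        have hTs : T ⊆ s := hTpos.trans (Finset.filter_subset _ _)
        have hTne : T.Nonempty := by
          rw [← Finset.card_pos]
          by_contra hcon
          push_neg at hcon
          interval_cases h : T.card
          · rw [Finset.card_eq_zero.mp h] at hTsum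
            simp at hTsum
            omega
        have hTcard : T.card ≤ F := by
          have h1 : (T.card : ℤ) ≤ ∑ i ∈ T, x i := by
            calc (T.card : ℤ) = ∑ _i ∈ T, (1:ℤ) := by
                  rw [Finset.sum_const, nsmul_eq_mul, mul_one]
              _ ≤ _ := Finset.sum_le_sum (fun i hi => (hposb i (hTpos hi)).1)
          rw [hTsum] at h1
          exact_mod_cast h1
        have hsum' : ∑ j ∈ s \ T, x j = ∑ j ∈ s, x j - F := by
          rw [Finset.sum_sdiff_eq_sub hTs, hTsum]
        have hcard' : (s \ T).card ≤ n := by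
          rw [Finset.card_sdiff_of_subset hTs]
          have h1 : 0 < T.card := Finset.card_pos.mpr hTne
          have h2 : T.card ≤ s.card := Finset.card_le_card hTs
          omega
        have hS0' : (0:ℤ) ≤ ∑ j ∈ s \ T, x j := by rw [hsum']; linarith
        have hdvd' : ((F:ℕ):ℤ) ∣ ∑ j ∈ s \ T, x j := by
          rw [hsum']
          exact dvd_sub hSdvd ⟨1, by ring⟩
        obtain ⟨P', hP1, hP2, hP3, hP4⟩ := IH (s \ T) hcard' hS0' hdvd'
        refine extend_partition x F bd hTs hP1 hP2 hP3 hP4 ?_ ?_ ?_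
        · calc T.card ≤ F := hTcard
            _ ≤ bd := Nat.le_mul_of_pos_right _ (by omega)
        · exact Or.inr ⟨hTsum, hSpos⟩
        · rw [hTsum]; positivity
      · -- small case: S = F, the whole set is one block
        push_neg at hbig
        have hSF : ∑ i ∈ s, x i = (F:ℤ) := by
          have h2F : ∑ i ∈ s, x i < 2 * F := by
            have : (ζ:ℤ) * Nat.factorial ζ < F := by exact_mod_cast hzf
            linarith [hSP, hbig]
          have : ((F:ℕ):ℤ) ∣ (∑ i ∈ s, x i - F) := dvd_sub hSdvd ⟨1, by ring⟩
          have habs : |∑ i ∈ s, x i - F| < (F:ℤ) := by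
            rw [abs_lt]
            constructor <;> linarith
          have := Int.eq_zero_of_abs_lt_dvd this habs
          linarith
        refine ⟨{s}, by simp, by simp, by simp, ?_⟩
        intro b hb
        rw [Finset.mem_singleton] at hb
        rw [hb]
        refine ⟨?_, Or.inr ⟨hSF, hSpos⟩⟩
        -- card bound: s.card ≤ 3F ≤ bd
        set neg := s.filter (fun i => x i < 0) with hneg
        have hcardsplit : s.card = pos.card + neg.card := by
          rw [hpos, hneg, ← Finset.card_union_of_disjoint]
          · congr 1
            ext i
            simp only [Finset.mem_union, Finset.mem_filter]
            constructor
            · intro hi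
              rcases lt_trichotomy (x i) 0 with h | h | h
              · exact Or.inr ⟨hi, h⟩
              · exact absurd h (hz i hi)
              · exact Or.inl ⟨hi, h⟩
            · rintro (⟨hi, _⟩ | ⟨hi, _⟩) <;> exact hi
          · rw [Finset.disjoint_left]
            rintro a ha hb'
            have h1 := (Finset.mem_filter.mp ha).2
            have h2 := (Finset.mem_filter.mp hb').2
            linarith
        have hposcard : (pos.card : ℤ) ≤ ∑ i ∈ pos, x i := by
          calc (pos.card : ℤ) = ∑ _i ∈ pos, (1:ℤ) := by
                rw [Finset.sum_const, nsmul_eq_mul, mul_one]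
            _ ≤ _ := Finset.sum_le_sum (fun i hi => (hposb i hi).1)
        have hnegsum : ∑ i ∈ neg, (-x i) = ∑ i ∈ pos, x i - ∑ i ∈ s, x i := by
          have hsplit2 : ∑ i ∈ s, x i = ∑ i ∈ pos, x i + ∑ i ∈ neg, x i := by
            rw [hpos, hneg, ← Finset.sum_filter_add_sum_filter_not s (fun i => 0 < x i)]
            congr 1
            apply Finset.sum_congr
            · ext i
              simp only [Finset.mem_filter, not_lt]
              exact and_congr_right fun hi =>
                ⟨fun h => lt_of_le_of_ne h (hz i hi), le_of_lt⟩
            · intros; rfl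
          rw [Finset.sum_neg_distrib]
          linarith
        have hnegcard : (neg.card : ℤ) ≤ ∑ i ∈ neg, (-x i) := by
          calc (neg.card : ℤ) = ∑ _i ∈ neg, (1:ℤ) := by
                rw [Finset.sum_const, nsmul_eq_mul, mul_one]
            _ ≤ _ := by
              apply Finset.sum_le_sum
              intro i hi
              have := (Finset.mem_filter.mp hi).2
              omega
        have hzf' : ((ζ:ℤ) * Nat.factorial ζ) < (F:ℤ) := by exact_mod_cast hzf
        have hcards : (s.card : ℤ) ≤ 3 * F := by
          have : (s.card : ℤ) = (pos.card : ℤ) + (neg.card : ℤ) := by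
            rw [hcardsplit]; push_cast; ring
          rw [this]
          have hP2' : ∑ i ∈ pos, x i < (F:ℤ) + F := by linarith
          linarith [hposcard, hnegcard, hnegsum, hSF, hP2', hFS]
        have : (s.card : ℤ) ≤ (bd:ℤ) := by
          calc (s.card : ℤ) ≤ 3 * F := hcards
            _ ≤ (bd:ℤ) := by
              rw [hbd]
              push_cast
              nlinarith [hFpos, hζ]
        exact_mod_cast this


/-- integers `x₁,…,x_m` with `|x_i| ≤ ζ` whose sum `x` is a multiple of
`(6ζ²+2ζ+1)!` can be partitioned into subsets `T_k` with `|T_k| ≤ (6ζ²+2ζ+1)!·(6ζ+2)`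
and `∑_{i∈T_k} x_i ∈ {0, sgn(x)·(6ζ²+2ζ+1)!}`. -/
theorem stmt7 (ζ m : ℕ) (hζ : 0 < ζ)
    (x : Fin m → ℤ) (hub : ∀ i, |x i| ≤ (ζ : ℤ))
    (hdvd : ((Nat.factorial (6 * ζ ^ 2 + 2 * ζ + 1) : ℤ)) ∣ ∑ i, x i) :
    ∃ (m' : ℕ) (T : Fin m' → Finset (Fin m)),
      (∀ k l, k ≠ l → Disjoint (T k) (T l)) ∧
      (∀ i, ∃ k, i ∈ T k) ∧
      ∀ k, (T k).card ≤ Nat.factorial (6 * ζ ^ 2 + 2 * ζ + 1) * (6 * ζ + 2) ∧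
        (∑ i ∈ T k, x i = 0 ∨
          ∑ i ∈ T k, x i
            = (∑ i, x i).sign * (Nat.factorial (6 * ζ ^ 2 + 2 * ζ + 1) : ℤ)) := by
  classical
  set F : ℕ := Nat.factorial (6*ζ^2+2*ζ+1) with hF
  rcases le_or_gt 0 (∑ i, x i) with hS | hS
  · obtain ⟨P, hP1, hP2, hP3, hP4⟩ :=
      mainPart ζ hζ x hub (Finset.univ.card) Finset.univ le_rfl hS hdvd
    refine ⟨P.card, fun k => ((P.equivFin.symm k : {b // b ∈ P}) : Finset (Fin m)), ?_, ?_, ?_⟩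
    · intro k l hkl
      apply hP2 _ (P.equivFin.symm k).2 _ (P.equivFin.symm l).2
      intro hc
      exact hkl (P.equivFin.symm.injective (Subtype.ext hc))
    · intro i
      have hi : i ∈ P.biUnion id := by rw [hP3]; exact Finset.mem_univ i
      obtain ⟨b, hb, hib⟩ := Finset.mem_biUnion.mp hi
      refine ⟨P.equivFin ⟨b, hb⟩, ?_⟩
      simp only [Equiv.symm_apply_apply]
      exact hib
    · intro k
      obtain ⟨h1, h2⟩ := hP4 _ (P.equivFin.symm k).2
      refine ⟨h1, ?_⟩
      rcases h2 with h | ⟨hFsum, hpos⟩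
      · exact Or.inl h
      · right
        rw [hFsum, Int.sign_eq_one_of_pos hpos, one_mul]
  · set y : Fin m → ℤ := fun i => - x i with hy
    have hsumy : ∀ b : Finset (Fin m), ∑ i ∈ b, y i = - ∑ i ∈ b, x i := by
      intro b
      rw [hy, Finset.sum_neg_distrib]
    obtain ⟨P, hP1, hP2, hP3, hP4⟩ :=
      mainPart ζ hζ y (fun i => by rw [hy]; simpa using hub i) (Finset.univ.card) Finset.univ
        le_rfl (by rw [hsumy]; linarith) (by rw [hsumy]; exact Dvd.dvd.neg_right hdvd)
    refine ⟨P.card, fun k => ((P.equivFin.symm k : {b // b ∈ P}) : Finset (Fin m)), ?_, ?_, ?_⟩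
    · intro k l hkl
      apply hP2 _ (P.equivFin.symm k).2 _ (P.equivFin.symm l).2
      intro hc
      exact hkl (P.equivFin.symm.injective (Subtype.ext hc))
    · intro i
      have hi : i ∈ P.biUnion id := by rw [hP3]; exact Finset.mem_univ i
      obtain ⟨b, hb, hib⟩ := Finset.mem_biUnion.mp hi
      refine ⟨P.equivFin ⟨b, hb⟩, ?_⟩
      simp only [Equiv.symm_apply_apply]
      exact hib
    · intro k
      obtain ⟨h1, h2⟩ := hP4 _ (P.equivFin.symm k).2
      refine ⟨h1, ?_⟩
      rw [hsumy] at h2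
      rcases h2 with h | ⟨hFsum, _⟩
      · exact Or.inl (by linarith)
      · right
        rw [Int.sign_eq_neg_one_of_neg hS]
        linarith
end

section
/- Let H_com be a combinatorial 4-block n-fold matrix with parameters Δ, t_A, t_B, s_D, t_D, and let G ∈ ℤ_{>0} be such that every Graver basis element of H_com^{two-stage} has ℓ∞-norm at most G. Set λ₀ = Δ·t_B·G and λ = (6λ₀² + 2λ₀ + 1)!. If g ∈ ker_ℤ(H_com) and the integer B g⁰ is a multiple of λ, then g admits a uniform decomposition g = Σ_{j=1}^N η_j such that, for every j, ‖η_j‖∞ ≤ (6λ₀² + 2λ₀ + 1)!·(6λ₀ + 2)·G and B η_j⁰ ∈ {0, sgn(B g⁰)·λ}; in particular every B η_j⁰ is a multiple of λ. -/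
open Matrix

/-- `(6·l₀² + 2·l₀ + 1)!`, the value `λ` of Lemma 12 with `λ₀ = l₀`. -/
def lamF (l0 : ℕ) : ℕ := Nat.factorial (6 * l0 ^ 2 + 2 * l0 + 1)

set_option linter.unusedSectionVars false
set_option linter.unusedVariables false
set_option maxHeartbeats 1000000

section Part1
variable {ι : Type*} [Fintype ι] [DecidableEq ι]

lemma conf_nonneg {x g : ℤ} (hs : 0 ≤ x * g) (ha : |x| ≤ |g|) (hg : 0 ≤ g) :
    0 ≤ x ∧ x ≤ g := by
  rcases hg.lt_or_eq with h | h
  · refine ⟨by nlinarith, ?_⟩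
    calc x ≤ |x| := le_abs_self x
      _ ≤ |g| := ha
      _ = g := abs_of_pos h
  · have hx : |x| ≤ 0 := by rw [← h] at ha; simpa using ha
    have : x = 0 := abs_nonpos_iff.mp hx
    constructor <;> simp [this, ← h]

lemma conf_nonpos {x g : ℤ} (hs : 0 ≤ x * g) (ha : |x| ≤ |g|) (hg : g ≤ 0) :
    g ≤ x ∧ x ≤ 0 := by
  have h := conf_nonneg (x := -x) (g := -g) (by nlinarith) (by simpa using ha) (by linarith)
  constructor <;> linarith [h.1, h.2]

lemma conf_refl (x : ι → ℤ) : Conf x x := fun k => ⟨mul_self_nonneg _, le_rfl⟩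

lemma conf_zero (g : ι → ℤ) : Conf 0 g := fun k => by simp

lemma conf_trans {x y z : ι → ℤ} (h1 : Conf x y) (h2 : Conf y z) : Conf x z := by
  intro k
  obtain ⟨s1, a1⟩ := h1 k
  obtain ⟨s2, a2⟩ := h2 k
  refine ⟨?_, a1.trans a2⟩
  rcases eq_or_ne (y k) 0 with h | h
  · have : x k = 0 := abs_nonpos_iff.mp (by rw [h] at a1; simpa using a1)
    simp [this]
  · have h2' : 0 < y k * y k := mul_self_pos.mpr h
    nlinarith [mul_nonneg s1 s2]

lemma conf_sub_self {x g : ι → ℤ} (h : Conf x g) : Conf (g - x) g := by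
  intro k
  obtain ⟨hs, ha⟩ := h k
  rcases le_or_gt 0 (g k) with hg | hg
  · obtain ⟨h1, h2⟩ := conf_nonneg hs ha hg
    constructor
    · simp only [Pi.sub_apply]; nlinarith
    · simp only [Pi.sub_apply]; rw [abs_of_nonneg (by linarith), abs_of_nonneg hg]; linarith
  · obtain ⟨h1, h2⟩ := conf_nonpos hs ha hg.le
    constructor
    · simp only [Pi.sub_apply]; nlinarith
    · simp only [Pi.sub_apply]; rw [abs_of_nonpos (by linarith), abs_of_nonpos hg.le]; linarith

/-- size of an integer vector -/
def isize (x : ι → ℤ) : ℕ := ∑ k, (x k).natAbs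

lemma natAbs_le_of_abs_le {a b : ℤ} (h : |a| ≤ |b|) : a.natAbs ≤ b.natAbs := by
  rw [Int.abs_eq_natAbs, Int.abs_eq_natAbs] at h; exact_mod_cast h

lemma isize_mono {x g : ι → ℤ} (h : Conf x g) : isize x ≤ isize g := by
  exact Finset.sum_le_sum fun k _ => natAbs_le_of_abs_le (h k).2

lemma isize_sub_add {x g : ι → ℤ} (h : Conf x g) : isize (g - x) + isize x = isize g := by
  simp only [isize]
  rw [← Finset.sum_add_distrib]
  apply Finset.sum_congr rfl
  intro k _
  obtain ⟨hs, ha⟩ := h k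
  simp only [Pi.sub_apply]
  rcases le_or_gt 0 (g k) with hg | hg
  · obtain ⟨h1, h2⟩ := conf_nonneg hs ha hg; omega
  · obtain ⟨h1, h2⟩ := conf_nonpos hs ha hg.le; omega

lemma eq_of_natAbs_eq_sign {a b : ℤ} (h : a.natAbs = b.natAbs) (hs : 0 ≤ a * b) : a = b := by
  rcases Int.natAbs_eq_natAbs_iff.mp h with h' | h'
  · exact h'
  · subst h'
    nlinarith [sq_nonneg b]

lemma isize_eq_zero {x : ι → ℤ} (h : isize x = 0) : x = 0 := by
  funext k
  have := Finset.sum_eq_zero_iff.mp h k (Finset.mem_univ k)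
  simpa [Int.natAbs_eq_zero] using this

theorem exists_graver_decomp {R : Type*} [Fintype R] (M : Matrix R ι ℤ) :
    ∀ (g : ι → ℤ), M.mulVec g = 0 →
    ∃ l : List (ι → ℤ), l.sum = g ∧ ∀ x ∈ l, IsGraver M x ∧ Conf x g := by
  suffices H : ∀ N g, isize g ≤ N → M.mulVec g = 0 →
      ∃ l : List (ι → ℤ), l.sum = g ∧ ∀ x ∈ l, IsGraver M x ∧ Conf x g by
    intro g hg; exact H (isize g) g le_rfl hg
  intro N
  induction N with
  | zero =>
    intro g hsz _
    have : g = 0 := isize_eq_zero (Nat.le_zero.mp hsz)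
    exact ⟨[], by simp [this], by simp⟩
  | succ N ih =>
    intro g hsz hker
    by_cases h0 : g = 0
    · exact ⟨[], by simp [h0], by simp⟩
    · set SS : Set ℕ := {m | ∃ x : ι → ℤ, x ≠ 0 ∧ M.mulVec x = 0 ∧ Conf x g ∧ isize x = m} with hSS
      have hne : SS.Nonempty := ⟨isize g, g, h0, hker, conf_refl g, rfl⟩
      have hmem := Nat.sInf_mem hne
      obtain ⟨x, hx0, hxker, hxconf, hxsz⟩ := hmem
      have hxgraver : IsGraver M x := by
        refine ⟨hxker, hx0, ?_⟩
        intro y hyker hy0 hyconf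
        have hyg : Conf y g := conf_trans hyconf hxconf
        have h1 : sInf SS ≤ isize y := Nat.sInf_le ⟨y, hy0, hyker, hyg, rfl⟩
        have h2 : isize y ≤ isize x := isize_mono hyconf
        have heq : isize y = isize x := le_antisymm h2 (hxsz ▸ h1)
        have hco : ∀ k, (y k).natAbs = (x k).natAbs := by
          have hle : ∀ k ∈ Finset.univ, (y k).natAbs ≤ (x k).natAbs :=
            fun k _ => natAbs_le_of_abs_le (hyconf k).2
          intro k
          exact (Finset.sum_eq_sum_iff_of_le hle).mp heq k (Finset.mem_univ k)
        funext k
        exact eq_of_natAbs_eq_sign (hco k) (hyconf k).1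
      have hx1 : 1 ≤ isize x := by
        rcases Nat.eq_zero_or_pos (isize x) with h | h
        · exact absurd (isize_eq_zero h) hx0
        · exact h
      have hgker' : M.mulVec (g - x) = 0 := by
        have : M.mulVec (g - x) = M.mulVec g - M.mulVec x := by
          exact Matrix.mulVec_sub M g x
        rw [this, hker, hxker, sub_zero]
      have hszsub : isize (g - x) ≤ N := by
        have := isize_sub_add hxconf
        omega
      obtain ⟨l', hl'sum, hl'mem⟩ := ih (g - x) hszsub hgker'
      refine ⟨x :: l', by simp [hl'sum], ?_⟩
      intro y hy
      rcases List.mem_cons.mp hy with h | h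
      · subst h; exact ⟨hxgraver, hxconf⟩
      · obtain ⟨h1, h2⟩ := hl'mem y h
        exact ⟨h1, conf_trans h2 (conf_sub_self hxconf)⟩

end Part1

section Part2
variable {ι : Type*} [DecidableEq ι]

lemma lamF_pos (l0 : ℕ) : 0 < lamF l0 := Nat.factorial_pos _

lemma fact_dvd_lamF (l0 : ℕ) : l0.factorial ∣ lamF l0 :=
  Nat.factorial_dvd_factorial (by nlinarith [sq_nonneg l0])

lemma fact_le_lamF (l0 : ℕ) : l0.factorial ≤ lamF l0 :=
  Nat.le_of_dvd (lamF_pos l0) (fact_dvd_lamF l0)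

lemma mul_fact_lt_lamF (l0 : ℕ) : l0 * l0.factorial < lamF l0 := by
  have h1 : l0 * l0.factorial < (l0 + 1) * l0.factorial := by
    have := Nat.factorial_pos l0; nlinarith
  have h2 : (l0 + 1) * l0.factorial = (l0 + 1).factorial := (Nat.factorial_succ l0).symm
  have h3 : (l0 + 1).factorial ≤ lamF l0 :=
    Nat.factorial_le (by nlinarith [sq_nonneg l0])
  omega

/-- chunk extraction: from positive values bounded by l0 with large total sum,
extract a subset with sum exactly mN (a multiple of l0!). -/
lemma chunk (l0 : ℕ) (a : ι → ℤ) :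
    ∀ (mN : ℕ) (s : Finset ι), (∀ i ∈ s, 1 ≤ a i ∧ a i ≤ (l0 : ℤ)) →
    (l0.factorial ∣ mN) → (mN : ℤ) + l0 * l0.factorial ≤ ∑ i ∈ s, a i →
    ∃ t ⊆ s, (∑ i ∈ t, a i = (mN : ℤ)) ∧ t.card ≤ mN := by
  intro mN
  induction mN using Nat.strong_induction_on with
  | _ mN ih =>
    intro s hval hdvd hsum
    rcases Nat.eq_zero_or_pos mN with h0 | hpos
    · exact ⟨∅, Finset.empty_subset s, by simp [h0], by simp⟩
    · have hL1 : 1 ≤ l0.factorial := Nat.one_le_iff_ne_zero.mpr (Nat.factorial_ne_zero l0)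
      have hLmN : l0.factorial ≤ mN := Nat.le_of_dvd hpos hdvd
      -- find a popular value v
      have hfib : ∑ v ∈ Finset.Icc (1:ℤ) (l0:ℤ),
          ∑ i ∈ s.filter (fun i => a i = v), a i = ∑ i ∈ s, a i :=
        Finset.sum_fiberwise_of_maps_to
          (fun i hi => Finset.mem_Icc.mpr ⟨(hval i hi).1, (hval i hi).2⟩) a
      have hinner : ∀ v ∈ Finset.Icc (1:ℤ) (l0:ℤ),
          ∑ i ∈ s.filter (fun i => a i = v), a i
            = ((s.filter (fun i => a i = v)).card : ℤ) * v := by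
        intro v hv
        rw [Finset.sum_congr rfl (fun i hi => (Finset.mem_filter.mp hi).2), Finset.sum_const]
        simp [mul_comm]
      have hexv : ∃ v ∈ Finset.Icc (1:ℤ) (l0:ℤ),
          (l0.factorial : ℤ) ≤ ((s.filter (fun i => a i = v)).card : ℤ) * v := by
        by_contra hno
        push_neg at hno
        have hbd : ∑ v ∈ Finset.Icc (1:ℤ) (l0:ℤ),
            ∑ i ∈ s.filter (fun i => a i = v), a i
              ≤ ∑ v ∈ Finset.Icc (1:ℤ) (l0:ℤ), ((l0.factorial : ℤ) - 1) := by
          apply Finset.sum_le_sum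
          intro v hv
          rw [hinner v hv]
          have := hno v hv
          omega
        rw [Finset.sum_const] at hbd
        have hcard : (Finset.Icc (1:ℤ) (l0:ℤ)).card ≤ l0 := by
          rw [Int.card_Icc]
          simp
        have hmN1 : (1 : ℤ) ≤ (mN : ℤ) := by exact_mod_cast hpos
        have h1 : ∑ i ∈ s, a i ≤ (l0 : ℤ) * ((l0.factorial : ℤ) - 1) := by
          rw [hfib] at hbd
          calc ∑ i ∈ s, a i ≤ ((Finset.Icc (1:ℤ) (l0:ℤ)).card : ℤ) * ((l0.factorial : ℤ) - 1) := by
                exact_mod_cast hbd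
            _ ≤ (l0 : ℤ) * ((l0.factorial : ℤ) - 1) := by
                have : (0:ℤ) ≤ (l0.factorial : ℤ) - 1 := by
                  have h := hL1; push_cast; omega
                apply mul_le_mul_of_nonneg_right _ this
                exact_mod_cast hcard
        nlinarith
      obtain ⟨v, hvmem, hvcount⟩ := hexv
      obtain ⟨hv1, hvl0⟩ := Finset.mem_Icc.mp hvmem
      set vN := v.toNat with hvN
      have hvcast : (vN : ℤ) = v := Int.toNat_of_nonneg (by linarith)
      have hvN1 : 1 ≤ vN := by omega
      have hvNl0 : vN ≤ l0 := by exact_mod_cast hvcast ▸ hvl0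
      have hvdvd : vN ∣ l0.factorial := Nat.dvd_factorial hvN1 hvNl0
      have hdivmul : l0.factorial / vN * vN = l0.factorial := Nat.div_mul_cancel hvdvd
      have hcount : l0.factorial / vN ≤ (s.filter (fun i => a i = v)).card := by
        have h1 : (l0.factorial : ℤ) ≤ ((s.filter (fun i => a i = v)).card : ℤ) * vN := by
          rw [hvcast]; exact hvcount
        have h2 : l0.factorial ≤ (s.filter (fun i => a i = v)).card * vN := by exact_mod_cast h1
        exact Nat.le_of_mul_le_mul_right (by rw [hdivmul]; exact h2) (by omega)
      obtain ⟨u, husub, hucard⟩ := Finset.exists_subset_card_eq hcount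
      have husum : ∑ i ∈ u, a i = (l0.factorial : ℤ) := by
        have : ∀ i ∈ u, a i = v := fun i hi => (Finset.mem_filter.mp (husub hi)).2
        rw [Finset.sum_congr rfl this, Finset.sum_const, hucard, ← hvcast, nsmul_eq_mul]
        exact_mod_cast hdivmul
      have husubs : u ⊆ s := husub.trans (Finset.filter_subset _ s)
      -- recurse
      have hrec := ih (mN - l0.factorial) (by omega) (s \ u)
        (fun i hi => hval i (Finset.mem_sdiff.mp hi).1)
        (Nat.dvd_sub hdvd dvd_rfl)
        (by
          rw [Finset.sum_sdiff_eq_sub husubs, husum]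
          push_cast [Nat.cast_sub hLmN]
          linarith)
      obtain ⟨t', ht'sub, ht'sum, ht'card⟩ := hrec
      have hdisj : Disjoint t' u :=
        Finset.disjoint_of_subset_left ht'sub Finset.sdiff_disjoint
      refine ⟨t' ∪ u, ?_, ?_, ?_⟩
      · exact Finset.union_subset (ht'sub.trans (Finset.sdiff_subset)) husubs
      · rw [Finset.sum_union hdisj, ht'sum, husum]
        push_cast [Nat.cast_sub hLmN]
        ring
      · rw [Finset.card_union_of_disjoint hdisj, hucard]
        have : l0.factorial / vN ≤ l0.factorial := Nat.div_le_self _ _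
        omega

end Part2

section Part2b
variable {ι : Type*} [DecidableEq ι]

/-- greedy ordering: a list of k distinct elements of s whose prefix sums (shifted by p)
stay within [-l0, l0]. -/
lemma seqW (l0 : ℕ) (a : ι → ℤ) (hb : ∀ i, |a i| ≤ (l0 : ℤ)) :
    ∀ (k : ℕ) (s : Finset ι) (p : ℤ), |p| ≤ (l0 : ℤ) → p + ∑ i ∈ s, a i = 0 → k ≤ s.card →
    ∃ l : List ι, l.length = k ∧ l.Nodup ∧ (∀ i ∈ l, i ∈ s) ∧
      ∀ j, |p + ((l.take j).map a).sum| ≤ (l0 : ℤ) := by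
  intro k
  induction k with
  | zero =>
    intro s p hp _ _
    exact ⟨[], rfl, List.nodup_nil, by simp, fun j => by simpa using hp⟩
  | succ k ih =>
    intro s p hp hsum hcard
    have hsne : s.Nonempty := Finset.card_pos.mp (by omega)
    have hex : ∃ e ∈ s, |p + a e| ≤ (l0 : ℤ) := by
      rcases lt_trichotomy p 0 with hneg | hzero | hpos
      · have : ∃ e ∈ s, 0 < a e := by
          by_contra hno
          push_neg at hno
          have : ∑ i ∈ s, a i ≤ 0 := Finset.sum_nonpos hno
          linarith
        obtain ⟨e, he, hae⟩ := this
        refine ⟨e, he, ?_⟩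
        have h1 := hb e
        rw [abs_le] at hp h1 ⊢
        omega
      · obtain ⟨e, he⟩ := hsne
        refine ⟨e, he, ?_⟩
        simpa [hzero] using hb e
      · have : ∃ e ∈ s, a e < 0 := by
          by_contra hno
          push_neg at hno
          have : 0 ≤ ∑ i ∈ s, a i := Finset.sum_nonneg hno
          linarith
        obtain ⟨e, he, hae⟩ := this
        refine ⟨e, he, ?_⟩
        have h1 := hb e
        rw [abs_le] at hp h1 ⊢
        omega
    obtain ⟨e, he, hpe⟩ := hex
    have hsum' : (p + a e) + ∑ i ∈ s.erase e, a i = 0 := by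
      have := Finset.sum_erase_add s a he
      linarith [this]
    have hcard' : k ≤ (s.erase e).card := by
      rw [Finset.card_erase_of_mem he]; omega
    obtain ⟨l', hlen, hnd, hmem, hpre⟩ := ih (s.erase e) (p + a e) hpe hsum' hcard'
    refine ⟨e :: l', by simp [hlen], ?_, ?_, ?_⟩
    · exact List.nodup_cons.mpr ⟨fun hc => (Finset.ne_of_mem_erase (hmem e hc)) rfl, hnd⟩
    · intro i hi
      rcases List.mem_cons.mp hi with h | h
      · exact h ▸ he
      · exact Finset.mem_of_mem_erase (hmem i h)
    · intro j
      cases j with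
      | zero => simpa using hp
      | succ j =>
        have := hpre j
        rw [List.take_succ_cons, List.map_cons, List.sum_cons, ← add_assoc]
        exact this

/-- extraction of a small nonempty zero-sum block from a zero-sum set. -/
lemma zeroblock (l0 : ℕ) (a : ι → ℤ) (hb : ∀ i, |a i| ≤ (l0 : ℤ)) (s : Finset ι)
    (hsum : ∑ i ∈ s, a i = 0) (hcard : 2 * l0 + 1 ≤ s.card) :
    ∃ t ⊆ s, t.Nonempty ∧ t.card ≤ 2 * l0 + 1 ∧ ∑ i ∈ t, a i = 0 := by
  obtain ⟨l, hlen, hnd, hmem, hpre⟩ :=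
    seqW l0 a hb (2 * l0 + 1) s 0 (by simp) (by simpa using hsum) hcard
  simp only [zero_add] at hpre
  set f : Fin (2 * l0 + 2) → ℤ := fun j => ((l.take j).map a).sum with hf
  have hmaps : ∀ j : Fin (2 * l0 + 2), j ∈ Finset.univ → f j ∈ Finset.Icc (-(l0:ℤ)) l0 :=
    fun j _ => Finset.mem_Icc.mpr (abs_le.mp (hpre j))
  have hlt : (Finset.Icc (-(l0:ℤ)) (l0:ℤ)).card < (Finset.univ : Finset (Fin (2*l0+2))).card := by
    rw [Int.card_Icc]
    simp
    omega
  obtain ⟨j₁, _, j₂, _, hne, hfe⟩ :=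
    Finset.exists_ne_map_eq_of_card_lt_of_maps_to hlt hmaps
  suffices hkey : ∀ k₁ k₂ : Fin (2 * l0 + 2), k₁ < k₂ → f k₁ = f k₂ →
      ∃ t ⊆ s, t.Nonempty ∧ t.card ≤ 2 * l0 + 1 ∧ ∑ i ∈ t, a i = 0 by
    rcases lt_or_gt_of_ne hne with h12 | h12
    · exact hkey j₁ j₂ h12 hfe
    · exact hkey j₂ j₁ h12 hfe.symm
  clear hfe hne
  clear! j₁ j₂
  intro j₁ j₂ h12 hfe
  set j : ℕ := (j₁ : ℕ) with hj
  set j' : ℕ := (j₂ : ℕ) with hj'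
  have hjj' : j < j' := h12
  have hj'le : j' ≤ 2 * l0 + 1 := by omega
  set blk : List ι := (l.take j').drop j with hblk
  have hsub : blk.Sublist l := (List.drop_sublist j _).trans (List.take_sublist j' l)
  have hbnd : blk.Nodup := hnd.sublist hsub
  have hblen : blk.length = j' - j := by
    rw [hblk, List.length_drop, List.length_take, hlen]
    omega
  have hsplit : l.take j ++ blk = l.take j' := by
    rw [hblk]
    have h1 := List.take_append_drop j (l.take j')
    rwa [List.take_take, min_eq_left hjj'.le] at h1
  have hbsum : (blk.map a).sum = 0 := by
    have h2 : ((l.take j).map a).sum + (blk.map a).sum = ((l.take j').map a).sum := by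
      rw [← List.sum_append, ← List.map_append, hsplit]
    have h3 : f j₁ = ((l.take j).map a).sum := rfl
    have h4 : f j₂ = ((l.take j').map a).sum := rfl
    rw [h3, h4] at hfe
    linarith
  refine ⟨blk.toFinset, ?_, ?_, ?_, ?_⟩
  · intro i hi
    exact hmem i (hsub.mem (List.mem_toFinset.mp hi))
  · have : 0 < blk.length := by omega
    rcases blk with _ | ⟨b, bs⟩
    · simp at this
    · exact ⟨b, by simp⟩
  · rw [List.toFinset_card_of_nodup hbnd, hblen]
    omega
  · rw [List.sum_toFinset a hbnd, hbsum]

end Part2b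

section Part2c
variable {ι : Type*} [DecidableEq ι]

/-- extraction of a subset with sum exactly `lamF l0` from a set with large
divisible positive sum. -/
lemma extract (l0 : ℕ) (a : ι → ℤ) (hb : ∀ i, |a i| ≤ (l0 : ℤ)) (s : Finset ι)
    (hdvd : ((lamF l0 : ℤ)) ∣ ∑ i ∈ s, a i) (hge : (lamF l0 : ℤ) ≤ ∑ i ∈ s, a i) :
    ∃ t ⊆ s, t.Nonempty ∧ t.card ≤ (6 * l0 + 2) * lamF l0 ∧
      ∑ i ∈ t, a i = (lamF l0 : ℤ) := by
  have hlampos : (0:ℤ) < (lamF l0 : ℤ) := by exact_mod_cast lamF_pos l0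
  set P := s.filter (fun i => 0 < a i) with hP
  have hPval : ∀ i ∈ P, 1 ≤ a i ∧ a i ≤ (l0 : ℤ) := by
    intro i hi
    obtain ⟨his, hipos⟩ := Finset.mem_filter.mp hi
    exact ⟨hipos, (abs_le.mp (hb i)).2⟩
  have hsplit : ∑ i ∈ P, a i + ∑ i ∈ s.filter (fun i => ¬ 0 < a i), a i = ∑ i ∈ s, a i :=
    Finset.sum_filter_add_sum_filter_not s _ a
  have hnegpart : ∑ i ∈ s.filter (fun i => ¬ 0 < a i), a i ≤ 0 :=
    Finset.sum_nonpos (fun i hi => by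
      have := (Finset.mem_filter.mp hi).2; linarith [not_lt.mp this])
  have hTplus : ∑ i ∈ s, a i ≤ ∑ i ∈ P, a i := by linarith
  rcases le_or_gt ((lamF l0 : ℤ) + l0 * l0.factorial) (∑ i ∈ P, a i) with hA | hB
  · -- case A: chunk on positives
    obtain ⟨t, htsub, htsum, htcard⟩ := chunk l0 a (lamF l0) P hPval (fact_dvd_lamF l0) hA
    refine ⟨t, htsub.trans (Finset.filter_subset _ s), ?_, ?_, htsum⟩
    · rcases Finset.eq_empty_or_nonempty t with h | h
      · rw [h] at htsum; simp at htsum; omega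
      · exact h
    · calc t.card ≤ lamF l0 := htcard
        _ ≤ (6 * l0 + 2) * lamF l0 := Nat.le_mul_of_pos_left _ (by omega)
  · -- case B: total sum is exactly lamF l0
    have hfl : (l0 * l0.factorial : ℤ) < (lamF l0 : ℤ) := by exact_mod_cast mul_fact_lt_lamF l0
    have hsum2 : ∑ i ∈ s, a i < 2 * lamF l0 := by
      push_cast
      linarith
    have hseq : ∑ i ∈ s, a i = (lamF l0 : ℤ) := by
      obtain ⟨c, hc⟩ := hdvd
      have h1 : 1 ≤ c := by nlinarith
      have h2 : c < 2 := by nlinarith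
      have : c = 1 := by omega
      rw [hc, this, mul_one]
    set t := s.filter (fun i => a i ≠ 0) with ht
    have htsum : ∑ i ∈ t, a i = (lamF l0 : ℤ) := by
      rw [ht, Finset.sum_filter_ne_zero s, hseq]
    have htabs : ∑ i ∈ t, |a i| = ∑ i ∈ s, |a i| :=
      Finset.sum_filter_of_ne (fun i _ h => by simpa [abs_eq_zero] using h)
    have habs_split : ∑ i ∈ s, |a i| = 2 * (∑ i ∈ P, a i) - ∑ i ∈ s, a i := by
      have h1 : ∑ i ∈ P, |a i| = ∑ i ∈ P, a i :=
        Finset.sum_congr rfl (fun i hi => abs_of_pos (Finset.mem_filter.mp hi).2)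
      have h2 : ∑ i ∈ s.filter (fun i => ¬ 0 < a i), |a i|
          = - ∑ i ∈ s.filter (fun i => ¬ 0 < a i), a i := by
        rw [← Finset.sum_neg_distrib]
        exact Finset.sum_congr rfl (fun i hi =>
          abs_of_nonpos (not_lt.mp (Finset.mem_filter.mp hi).2))
      have h3 : ∑ i ∈ P, |a i| + ∑ i ∈ s.filter (fun i => ¬ 0 < a i), |a i| = ∑ i ∈ s, |a i| :=
        Finset.sum_filter_add_sum_filter_not s _ _
      linarith
    have hcard_le : (t.card : ℤ) ≤ ∑ i ∈ t, |a i| := by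
      have : ∀ i ∈ t, (1:ℤ) ≤ |a i| := fun i hi =>
        Int.one_le_abs (by exact_mod_cast (Finset.mem_filter.mp hi).2)
      calc (t.card : ℤ) = ∑ _i ∈ t, (1:ℤ) := by simp
        _ ≤ ∑ i ∈ t, |a i| := Finset.sum_le_sum this
    have hfactle : (l0.factorial : ℤ) ≤ (lamF l0 : ℤ) := by exact_mod_cast fact_le_lamF l0
    have hcard2 : (t.card : ℤ) ≤ ((6 * l0 + 2) * lamF l0 : ℕ) := by
      have h4 : (t.card : ℤ) ≤ 2 * (∑ i ∈ P, a i) - ∑ i ∈ s, a i := by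
        rw [htabs] at hcard_le; linarith
      have h5 : (t.card : ℤ) ≤ (lamF l0 : ℤ) + 2 * (l0 * l0.factorial) := by
        rw [hseq] at h4; push_cast at h4 ⊢; linarith
      have h6 : (0:ℤ) ≤ (l0:ℤ) := by positivity
      have h7 : (l0 : ℤ) * l0.factorial ≤ (lamF l0 : ℤ) := by push_cast at hfl ⊢; linarith
      push_cast
      nlinarith
    refine ⟨t, Finset.filter_subset _ s, ?_, by exact_mod_cast hcard2, htsum⟩
    rcases Finset.eq_empty_or_nonempty t with h | h
    · rw [h] at htsum; simp at htsum; omega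
    · exact h

lemma two_l0_le (l0 : ℕ) : 2 * l0 + 1 ≤ (6 * l0 + 2) * lamF l0 := by
  have h := lamF_pos l0
  nlinarith

/-- main coloring lemma: nonnegative divisible total. -/
lemma color (l0 : ℕ) (a : ι → ℤ) (hb : ∀ i, |a i| ≤ (l0 : ℤ)) :
    ∀ (N : ℕ) (s : Finset ι), s.card ≤ N → 0 ≤ ∑ i ∈ s, a i →
    ((lamF l0 : ℤ)) ∣ ∑ i ∈ s, a i →
    ∃ c : ι → ℕ, (∀ i ∈ s, c i < s.card + 1) ∧
      ∀ nn : ℕ,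
        (∑ i ∈ s.filter (fun i => c i = nn), a i = 0 ∨
          (0 < ∑ i ∈ s, a i ∧ ∑ i ∈ s.filter (fun i => c i = nn), a i = (lamF l0 : ℤ))) ∧
        (s.filter (fun i => c i = nn)).card ≤ (6 * l0 + 2) * lamF l0 := by
  intro N
  induction N with
  | zero =>
    intro s hcard _ _
    have hs : s = ∅ := Finset.card_eq_zero.mp (by omega)
    subst hs
    exact ⟨fun _ => 0, by simp, fun nn => by simp⟩
  | succ N ih =>
    intro s hcard hnonneg hdvd
    -- helper for the gluing construction
    have glue : ∀ t ⊆ s, t.Nonempty → t.card ≤ (6 * l0 + 2) * lamF l0 →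
        (∑ i ∈ t, a i = 0 ∨ (0 < ∑ i ∈ s, a i ∧ ∑ i ∈ t, a i = (lamF l0 : ℤ))) →
        (0 ≤ ∑ i ∈ s \ t, a i) → ((lamF l0 : ℤ) ∣ ∑ i ∈ s \ t, a i) →
        ∃ c : ι → ℕ, (∀ i ∈ s, c i < s.card + 1) ∧
          ∀ nn : ℕ,
            (∑ i ∈ s.filter (fun i => c i = nn), a i = 0 ∨
              (0 < ∑ i ∈ s, a i ∧ ∑ i ∈ s.filter (fun i => c i = nn), a i = (lamF l0 : ℤ))) ∧
            (s.filter (fun i => c i = nn)).card ≤ (6 * l0 + 2) * lamF l0 := by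
      intro t hts htne htcard htsum hrest_nonneg hrest_dvd
      have htcard1 : 1 ≤ t.card := Finset.card_pos.mpr htne
      have hscard1 : 1 ≤ s.card := by
        obtain ⟨x, hx⟩ := htne
        exact Finset.card_pos.mpr ⟨x, hts hx⟩
      have hsdcard : (s \ t).card = s.card - t.card := Finset.card_sdiff_of_subset hts
      have hsdlt : (s \ t).card ≤ N := by omega
      obtain ⟨c', hc'bnd, hc'fib⟩ := ih (s \ t) hsdlt hrest_nonneg hrest_dvd
      have hc'lt : ∀ i ∈ s \ t, c' i < s.card := by
        intro i hi
        have := hc'bnd i hi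
        omega
      refine ⟨fun i => if i ∈ t then s.card else c' i, ?_, ?_⟩
      · intro i hi
        by_cases h : i ∈ t
        · simp [h]
        · have : i ∈ s \ t := Finset.mem_sdiff.mpr ⟨hi, h⟩
          have := hc'lt i this
          simp only [if_neg h]
          omega
      · intro nn
        by_cases hnn : nn = s.card
        · have hfeq : s.filter (fun i => (if i ∈ t then s.card else c' i) = nn) = t := by
            ext i
            simp only [Finset.mem_filter]
            constructor
            · rintro ⟨his, hci⟩
              by_cases h : i ∈ t
              · exact h
              · exfalso
                rw [if_neg h] at hci
                have := hc'lt i (Finset.mem_sdiff.mpr ⟨his, h⟩)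
                omega
            · intro h
              exact ⟨hts h, by rw [if_pos h, hnn]⟩
          rw [hfeq]
          exact ⟨htsum, htcard⟩
        · have hfeq : s.filter (fun i => (if i ∈ t then s.card else c' i) = nn)
              = (s \ t).filter (fun i => c' i = nn) := by
            ext i
            simp only [Finset.mem_filter, Finset.mem_sdiff]
            constructor
            · rintro ⟨his, hci⟩
              by_cases h : i ∈ t
              · rw [if_pos h] at hci; exact absurd hci.symm (by omega)
              · rw [if_neg h] at hci; exact ⟨⟨his, h⟩, hci⟩
            · rintro ⟨⟨his, hit⟩, hci⟩
              exact ⟨his, by rw [if_neg hit]; exact hci⟩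
          rw [hfeq]
          obtain ⟨hfib1, hfib2⟩ := hc'fib nn
          refine ⟨?_, hfib2⟩
          rcases hfib1 with h | ⟨hpos', heq⟩
          · exact Or.inl h
          · refine Or.inr ⟨?_, heq⟩
            have hsplit : ∑ i ∈ s \ t, a i = ∑ i ∈ s, a i - ∑ i ∈ t, a i :=
              Finset.sum_sdiff_eq_sub hts
            have hlampos : (0:ℤ) < (lamF l0 : ℤ) := by exact_mod_cast lamF_pos l0
            rcases htsum with h0 | ⟨hp, _⟩
            · rw [hsplit, h0] at hpos'; linarith
            · exact hp
    rcases hnonneg.lt_or_eq with hpos | hzero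
    · -- positive sum: extract a lamF-block
      have hge : (lamF l0 : ℤ) ≤ ∑ i ∈ s, a i := Int.le_of_dvd hpos hdvd
      obtain ⟨t, hts, htne, htcard, htsum⟩ := extract l0 a hb s hdvd hge
      have hsplit : ∑ i ∈ s \ t, a i = ∑ i ∈ s, a i - ∑ i ∈ t, a i :=
        Finset.sum_sdiff_eq_sub hts
      exact glue t hts htne htcard (Or.inr ⟨hpos, htsum⟩)
        (by rw [hsplit, htsum]; linarith)
        (by rw [hsplit, htsum]; exact dvd_sub hdvd dvd_rfl)
    · -- zero sum
      rcases le_or_gt s.card (2 * l0 + 1) with hsmall | hbig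
      · refine ⟨fun _ => s.card, fun i _ => Nat.lt_succ_self _, ?_⟩
        intro nn
        by_cases hnn : nn = s.card
        · have : s.filter (fun _ => s.card = nn) = s := by
            rw [Finset.filter_true_of_mem (fun i _ => hnn.symm)]
          rw [this]
          exact ⟨Or.inl hzero.symm, le_trans hsmall (two_l0_le l0)⟩
        · have : s.filter (fun _ => s.card = nn) = ∅ :=
            Finset.filter_false_of_mem (fun i _ => fun h => hnn h.symm
              )
          rw [this]
          simp
      · obtain ⟨t, hts, htne, htcard, htsum⟩ := zeroblock l0 a hb s hzero.symm hbig.le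
        have hsplit : ∑ i ∈ s \ t, a i = ∑ i ∈ s, a i - ∑ i ∈ t, a i :=
          Finset.sum_sdiff_eq_sub hts
        exact glue t hts htne (le_trans htcard (two_l0_le l0)) (Or.inl htsum)
          (by rw [hsplit, htsum, ← hzero]; simp)
          (by rw [hsplit, htsum, ← hzero]; simp)

lemma color_signed (l0 : ℕ) (a : ι → ℤ) (hb : ∀ i, |a i| ≤ (l0 : ℤ)) (s : Finset ι)
    (hdvd : ((lamF l0 : ℤ)) ∣ ∑ i ∈ s, a i) :
    ∃ c : ι → ℕ, (∀ i ∈ s, c i < s.card + 1) ∧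
      ∀ nn : ℕ,
        (∑ i ∈ s.filter (fun i => c i = nn), a i = 0 ∨
          ∑ i ∈ s.filter (fun i => c i = nn), a i = (∑ i ∈ s, a i).sign * (lamF l0 : ℤ)) ∧
        (s.filter (fun i => c i = nn)).card ≤ (6 * l0 + 2) * lamF l0 := by
  rcases le_or_gt 0 (∑ i ∈ s, a i) with hnn | hneg
  · obtain ⟨c, hcb, hcf⟩ := color l0 a hb s.card s le_rfl hnn hdvd
    refine ⟨c, hcb, fun nn => ⟨?_, (hcf nn).2⟩⟩
    rcases (hcf nn).1 with h | ⟨hpos, heq⟩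
    · exact Or.inl h
    · refine Or.inr ?_
      rw [Int.sign_eq_one_of_pos hpos, one_mul]
      exact heq
  · have hb' : ∀ i, |(-a) i| ≤ (l0 : ℤ) := fun i => by simpa using hb i
    have hsneg : ∑ i ∈ s, (-a) i = -∑ i ∈ s, a i := by simp
    obtain ⟨c, hcb, hcf⟩ := color l0 (-a) hb' s.card s le_rfl
      (by rw [hsneg]; linarith) (by rw [hsneg]; exact (dvd_neg).mpr hdvd)
    refine ⟨c, hcb, fun nn => ⟨?_, (hcf nn).2⟩⟩
    have hfneg : ∑ i ∈ s.filter (fun i => c i = nn), (-a) i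
        = -∑ i ∈ s.filter (fun i => c i = nn), a i := by simp
    rcases (hcf nn).1 with h | ⟨hpos, heq⟩
    · rw [hfneg] at h
      exact Or.inl (by linarith)
    · rw [hfneg] at heq
      refine Or.inr ?_
      rw [Int.sign_eq_neg_one_of_neg hneg]
      linarith

end Part2c

section Part3
/-- conformality of subset sums of a full conformal decomposition, coordinatewise. -/
lemma conf_sum_coord {m : ℕ} (v : Fin m → ℤ) (gk : ℤ)
    (hc : ∀ i, 0 ≤ v i * gk ∧ |v i| ≤ |gk|) (htot : ∑ i, v i = gk) (F : Finset (Fin m)) :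
    0 ≤ (∑ i ∈ F, v i) * gk ∧ |∑ i ∈ F, v i| ≤ |gk| := by
  suffices H : ∀ (v : Fin m → ℤ) (gk : ℤ), (∀ i, 0 ≤ v i * gk ∧ |v i| ≤ |gk|) →
      (∑ i, v i = gk) → 0 ≤ gk → 0 ≤ (∑ i ∈ F, v i) * gk ∧ |∑ i ∈ F, v i| ≤ |gk| by
    rcases le_or_gt 0 gk with hg | hg
    · exact H v gk hc htot hg
    · have h1 := H (fun i => -v i) (-gk)
        (fun i => ⟨by rw [neg_mul_neg]; exact (hc i).1, by simpa using (hc i).2⟩)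
        (by rw [← htot]; simp) (by linarith)
      obtain ⟨ha, hb⟩ := h1
      have he : ∑ i ∈ F, (fun i => -v i) i = -∑ i ∈ F, v i := by simp
      rw [he] at ha hb
      constructor
      · nlinarith
      · rw [abs_neg] at hb; rwa [abs_neg] at hb
  intro v gk hc htot hg
  have hnn : ∀ i, 0 ≤ v i := fun i => (conf_nonneg (hc i).1 (hc i).2 hg).1
  have h1 : 0 ≤ ∑ i ∈ F, v i := Finset.sum_nonneg fun i _ => hnn i
  have h2 : ∑ i ∈ F, v i ≤ gk := by
    rw [← htot]
    exact Finset.sum_le_sum_of_subset_of_nonneg (Finset.subset_univ F) fun i _ _ => hnn i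
  refine ⟨mul_nonneg h1 hg, ?_⟩
  rw [abs_of_nonneg h1, abs_of_nonneg hg]
  exact h2


end Part3

/-- with `λ₀ = Δ·t_B·G` (where `G` bounds the ℓ∞-norm of the Graver elements
of the two-stage part) and `λ = (6λ₀²+2λ₀+1)!`, any `g ∈ ker_ℤ(H_com)` with `B g⁰` a
multiple of `λ` admits a uniform decomposition whose summands `η_j` satisfy
`‖η_j‖∞ ≤ (6λ₀²+2λ₀+1)!·(6λ₀+2)·G` and `B η_j⁰ ∈ {0, sgn(B g⁰)·λ}`. -/
theorem stmt8 (n tA tB sD Δ G : ℕ) (hn : 1 ≤ n) (hΔ : 0 < Δ) (hG : 0 < G)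
    (C : Matrix (Fin sD) (Fin tB) ℤ) (D : Fin n → Matrix (Fin sD) (Fin tA) ℤ)
    (B : Matrix (Fin 1) (Fin tB) ℤ) (A : Fin n → Matrix (Fin 1) (Fin tA) ℤ)
    (hC : ∀ r c, |C r c| ≤ (Δ : ℤ)) (hD : ∀ i r c, |D i r c| ≤ (Δ : ℤ))
    (hB : ∀ r c, |B r c| ≤ (Δ : ℤ)) (hA : ∀ i r c, |A i r c| ≤ (Δ : ℤ))
    (hGraver : ∀ y, IsGraver (Htwo (fun _ : Fin n => B) A) y → linf y ≤ G)
    (g : Fin tB ⊕ Fin n × Fin tA → ℤ)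
    (hg : (H4 C D (fun _ => B) A).mulVec g = 0)
    (hmul : ((lamF (Δ * tB * G) : ℤ)) ∣ B.mulVec (fun c => g (Sum.inl c)) 0) :
    ∃ (N : ℕ) (η : Fin N → Fin tB ⊕ Fin n × Fin tA → ℤ) (q : Fin 1 → ℤ),
      UniformDecomp (fun _ => B) A g η q ∧
      ∀ j, linf (η j) ≤ lamF (Δ * tB * G) * (6 * (Δ * tB * G) + 2) * G ∧
        (B.mulVec (fun c => η j (Sum.inl c)) 0 = 0 ∨
          B.mulVec (fun c => η j (Sum.inl c)) 0
            = (B.mulVec (fun c => g (Sum.inl c)) 0).sign * (lamF (Δ * tB * G) : ℤ)) := by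

  classical
  set l0 : ℕ := Δ * tB * G with hl0def
  set M : Matrix (Fin n × Fin 1) (Fin tB ⊕ Fin n × Fin tA) ℤ := Htwo (fun _ : Fin n => B) A
    with hM
  -- the two-stage rows of H4 agree with Htwo
  have hMg : M.mulVec g = 0 := by
    funext r
    have hrow := congrFun hg (Sum.inr r)
    have hentry : ∀ cc, M r cc = (H4 C D (fun _ => B) A) (Sum.inr r) cc := by
      intro cc
      cases cc <;> rfl
    have : M.mulVec g r = (H4 C D (fun _ => B) A).mulVec g (Sum.inr r) := by
      simp only [Matrix.mulVec, dotProduct]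
      exact Finset.sum_congr rfl fun cc _ => by rw [hentry cc]
    rw [this, hrow]
    rfl
  -- decompose g into Graver elements
  obtain ⟨l, hlsum, hlmem⟩ := exists_graver_decomp M g hMg
  set m : ℕ := l.length with hm
  set h : Fin m → (Fin tB ⊕ Fin n × Fin tA → ℤ) := fun i => l.get i with hh
  have hsum_univ : ∑ i : Fin m, h i = g := by
    have h0 : (∑ i : Fin l.length, l.get i) = l.sum := by
      rw [← List.sum_ofFn, List.ofFn_get]
    rw [hlsum] at h0
    exact h0
  have hmemi : ∀ i, IsGraver M (h i) ∧ Conf (h i) g := fun i => hlmem _ (by exact l.get_mem i)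
  have hGi : ∀ i, linf (h i) ≤ G := fun i => hGraver _ (hmemi i).1
  have habs : ∀ i k, |h i k| ≤ (G : ℤ) := by
    intro i k
    have h1 : (h i k).natAbs ≤ linf (h i) := by
      unfold linf; exact Finset.le_sup (f := fun k' => (h i k').natAbs) (Finset.mem_univ k)
    have h2 : (h i k).natAbs ≤ G := le_trans h1 (hGi i)
    rw [Int.abs_eq_natAbs]
    exact_mod_cast h2
  -- the B-values of the pieces
  set a : Fin m → ℤ := fun i => B.mulVec (fun c => h i (Sum.inl c)) 0 with ha
  have hadef : ∀ i, a i = ∑ c : Fin tB, B 0 c * h i (Sum.inl c) := by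
    intro i
    simp [ha, Matrix.mulVec, dotProduct]
  have hbound : ∀ i, |a i| ≤ (l0 : ℤ) := by
    intro i
    rw [hadef i]
    calc |∑ c : Fin tB, B 0 c * h i (Sum.inl c)|
        ≤ ∑ c : Fin tB, |B 0 c * h i (Sum.inl c)| := Finset.abs_sum_le_sum_abs _ _
      _ ≤ ∑ _c : Fin tB, ((Δ : ℤ) * G) := by
          refine Finset.sum_le_sum fun c _ => ?_
          rw [abs_mul]
          exact mul_le_mul (hB 0 c) (habs i _) (abs_nonneg _) (by positivity)
      _ = (tB : ℤ) * ((Δ : ℤ) * G) := by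
          rw [Finset.sum_const, Finset.card_univ, Fintype.card_fin, nsmul_eq_mul]
      _ = (l0 : ℤ) := by rw [hl0def]; push_cast; ring
  -- total B-value
  have hS : ∑ i : Fin m, a i = B.mulVec (fun c => g (Sum.inl c)) 0 := by
    have hgc : ∀ c, g (Sum.inl c) = ∑ i : Fin m, h i (Sum.inl c) := by
      intro c
      rw [← hsum_univ]
      simp [Finset.sum_apply]
    have : B.mulVec (fun c => g (Sum.inl c)) 0 = ∑ c : Fin tB, B 0 c * g (Sum.inl c) := by
      simp [Matrix.mulVec, dotProduct]
    rw [this]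
    calc ∑ i : Fin m, a i = ∑ i : Fin m, ∑ c : Fin tB, B 0 c * h i (Sum.inl c) :=
          Finset.sum_congr rfl fun i _ => hadef i
      _ = ∑ c : Fin tB, ∑ i : Fin m, B 0 c * h i (Sum.inl c) := Finset.sum_comm
      _ = ∑ c : Fin tB, B 0 c * g (Sum.inl c) := by
          refine Finset.sum_congr rfl fun c _ => ?_
          rw [hgc c, Finset.mul_sum]
  set S : ℤ := B.mulVec (fun c => g (Sum.inl c)) 0 with hSdef
  have hdvdS : ((lamF l0 : ℤ)) ∣ ∑ i : Fin m, a i := by rw [hS]; exact hmul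
  -- coloring
  obtain ⟨c, hcbnd, hcfib⟩ := color_signed l0 a hbound Finset.univ hdvdS
  rw [Finset.card_univ, Fintype.card_fin] at hcbnd
  have hcbnd' : ∀ i : Fin m, c i < m + 1 := fun i => hcbnd i (Finset.mem_univ i)
  set N : ℕ := m + 1 with hN
  set cF : Fin m → Fin N := fun i => ⟨c i, hcbnd' i⟩ with hcF
  set F : Fin N → Finset (Fin m) :=
    fun j => Finset.univ.filter (fun i => c i = (j : ℕ)) with hF
  have hfilter_eq : ∀ j : Fin N,
      Finset.univ.filter (fun i => cF i = j) = F j := by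
    intro j
    apply Finset.filter_congr
    intro i _
    simp [hcF, Fin.ext_iff]
  have hgdecomp : g = ∑ j : Fin N, ∑ i ∈ F j, h i := by
    have h0 : ∑ j : Fin N, ∑ i ∈ Finset.univ.filter (fun i => cF i = j), h i
        = ∑ i : Fin m, h i := Finset.sum_fiberwise _ _ _
    rw [← hsum_univ, ← h0]
    exact Finset.sum_congr rfl fun j _ => by rw [hfilter_eq j]
  -- fiber facts in terms of F
  have hfib : ∀ j : Fin N,
      (∑ i ∈ F j, a i = 0 ∨ ∑ i ∈ F j, a i = S.sign * (lamF l0 : ℤ)) ∧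
      (F j).card ≤ (6 * l0 + 2) * lamF l0 := by
    intro j
    have := hcfib (j : ℕ)
    rwa [hS] at this
  -- B-value of each fiber sum
  have hFB : ∀ j : Fin N,
      B.mulVec (fun c' => (∑ i ∈ F j, h i) (Sum.inl c')) 0 = ∑ i ∈ F j, a i := by
    intro j
    have h1 : (fun c' => (∑ i ∈ F j, h i) (Sum.inl c'))
        = ∑ i ∈ F j, (fun c' => h i (Sum.inl c')) := by
      funext c'
      simp [Finset.sum_apply]
    rw [h1]
    have h2 : B.mulVec (∑ i ∈ F j, (fun c' => h i (Sum.inl c')))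
        = ∑ i ∈ F j, B.mulVec (fun c' => h i (Sum.inl c')) := by
      simp only [← Matrix.mulVecLin_apply, map_sum]
    rw [h2, Finset.sum_apply]
  -- q
  set q : Fin 1 → ℤ := fun _ => if S = 0 then 1 else S.sign * (lamF l0 : ℤ) with hq
  have hlamne : ((lamF l0 : ℤ)) ≠ 0 := by
    have := lamF_pos l0
    positivity
  have hqne : q ≠ 0 := by
    intro hcon
    have hc0 := congrFun hcon 0
    rw [hq] at hc0
    by_cases hS0 : S = 0
    · rw [if_pos hS0] at hc0; exact one_ne_zero hc0
    · rw [if_neg hS0] at hc0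
      exact (mul_ne_zero (fun hsz => hS0 (Int.sign_eq_zero_iff_zero.mp hsz)) hlamne) hc0
  refine ⟨N, fun j => ∑ i ∈ F j, h i, q, ⟨hqne, hgdecomp, ?_⟩, ?_⟩
  · -- per-summand properties of the uniform decomposition
    intro j
    refine ⟨?_, ?_, ?_⟩
    · -- conformality
      intro k
      have hsc : ∑ i : Fin m, h i k = g k := by
        rw [← hsum_univ]; simp [Finset.sum_apply]
      have := conf_sum_coord (fun i => h i k) (g k)
        (fun i => (hmemi i).2 k) hsc (F j)
      simpa [Finset.sum_apply] using this
    · -- kernel of the two-stage part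
      have h2 : M.mulVec (∑ i ∈ F j, h i) = ∑ i ∈ F j, M.mulVec (h i) := by
        simp only [← Matrix.mulVecLin_apply, map_sum]
      rw [hM] at h2
      rw [h2]
      exact Finset.sum_eq_zero fun i _ => by
        have := (hmemi i).1.1
        rw [hM] at this
        exact this
    · -- tier-0 or tier-1
      by_cases hS0 : S = 0
      · left
        intro i'
        funext r
        have hr : r = 0 := Subsingleton.elim r 0
        subst hr
        have h0 : ∑ i ∈ F j, a i = 0 := by
          rcases (hfib j).1 with h0 | h0
          · exact h0
          · rw [h0, hS0, Int.sign_zero, zero_mul]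
        show B.mulVec (fun c' => (∑ i ∈ F j, h i) (Sum.inl c')) 0 = 0
        rw [hFB j, h0]
      · rcases (hfib j).1 with h0 | h0
        · left
          intro i'
          funext r
          have hr : r = 0 := Subsingleton.elim r 0
          subst hr
          show B.mulVec (fun c' => (∑ i ∈ F j, h i) (Sum.inl c')) 0 = 0
          rw [hFB j, h0]
        · right
          intro i'
          funext r
          have hr : r = 0 := Subsingleton.elim r 0
          subst hr
          show B.mulVec (fun c' => (∑ i ∈ F j, h i) (Sum.inl c')) 0 = q 0
          rw [hFB j, h0, hq, if_neg hS0]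
  · -- norm bound and B-value membership
    intro j
    constructor
    · -- linf bound
      have hcard := (hfib j).2
      unfold linf
      apply Finset.sup_le
      intro k _
      have h1 : |(∑ i ∈ F j, h i) k| ≤ ((F j).card : ℤ) * G := by
        have h2 : (∑ i ∈ F j, h i) k = ∑ i ∈ F j, h i k := by simp [Finset.sum_apply]
        rw [h2]
        calc |∑ i ∈ F j, h i k| ≤ ∑ i ∈ F j, |h i k| := Finset.abs_sum_le_sum_abs _ _
          _ ≤ ∑ _i ∈ F j, (G : ℤ) := Finset.sum_le_sum fun i _ => habs i k
          _ = ((F j).card : ℤ) * G := by rw [Finset.sum_const, nsmul_eq_mul]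
      have h3 : ((F j).card : ℤ) * G ≤ ((lamF l0 * (6 * l0 + 2) * G : ℕ) : ℤ) := by
        push_cast
        have hG0 : (0:ℤ) ≤ (G:ℕ) := by positivity
        have : ((F j).card : ℤ) ≤ ((6 * l0 + 2) * lamF l0 : ℕ) := by exact_mod_cast hcard
        push_cast at this
        nlinarith
      have h4 : |(∑ i ∈ F j, h i) k| ≤ ((lamF l0 * (6 * l0 + 2) * G : ℕ) : ℤ) :=
        le_trans h1 h3
      have h5 : (((∑ i ∈ F j, h i) k).natAbs : ℤ) = |(∑ i ∈ F j, h i) k| :=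
        (Int.abs_eq_natAbs _).symm
      rw [← h5] at h4
      exact_mod_cast h4
    · -- B-value
      rcases (hfib j).1 with h0 | h0
      · left
        show B.mulVec (fun c' => (∑ i ∈ F j, h i) (Sum.inl c')) 0 = 0
        rw [hFB j, h0]
      · right
        show B.mulVec (fun c' => (∑ i ∈ F j, h i) (Sum.inl c')) 0 = S.sign * (lamF l0 : ℤ)
        rw [hFB j, h0]
end

section
/- Let A be an M×d integer matrix, let λ, β ∈ ℤ_{>0}, and let g ∈ 𝒢(A) be a Graver basis element of A. Suppose λ·g = g₁ + ⋯ + g_p where each g_j ∈ ker_ℤ(A)\{0}, g_j ⊑ λ·g, and ‖g_j‖∞ ≤ β. Then p ≤ λ·d and ‖g‖∞ ≤ d·β. -/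
open Matrix

lemma band_lemma {c x y : ℤ} (hc : 0 < c) (hxy : x ≤ y)
    (h : (x + c - 1) / c = (y + c - 1) / c) : y - x ≤ c - 1 := by
  have h1 := Int.mul_ediv_add_emod (x + c - 1) c
  have h2 := Int.mul_ediv_add_emod (y + c - 1) c
  have h3 := Int.emod_nonneg (x + c - 1) hc.ne'
  have h4 := Int.emod_lt_of_pos (y + c - 1) hc
  rw [h] at h1
  linarith

lemma ceil_le {c x L : ℤ} (hc : 0 < c) (hx : x ≤ L * c) : (x + c - 1) / c ≤ L := by
  have h1 : x + c - 1 ≤ c - 1 + L * c := by linarith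
  have h2 := Int.ediv_le_ediv hc h1
  have h0 : (c - 1) / c = 0 := Int.ediv_eq_zero_of_lt (by linarith) (by linarith)
  rwa [Int.add_mul_ediv_right _ _ hc.ne', h0, zero_add] at h2

/-- the counting argument. If `g` is a Graver basis element of `A` and
`λ·g = g₁ + ⋯ + g_p` with nonzero kernel elements `g_j ⊑ λ·g` of ℓ∞-norm at most `β`,
then `p ≤ λ·d` and `‖g‖∞ ≤ d·β`. -/
theorem stmt13 (M d lam β p : ℕ) (hlam : 0 < lam) (hβ : 0 < β)
    (A : Matrix (Fin M) (Fin d) ℤ) (g : Fin d → ℤ) (hg : IsGraver A g)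
    (gs : Fin p → Fin d → ℤ)
    (hsum : (lam : ℤ) • g = ∑ j, gs j)
    (hker : ∀ j, A.mulVec (gs j) = 0)
    (hne : ∀ j, gs j ≠ 0)
    (hconf : ∀ j, Conf (gs j) ((lam : ℤ) • g))
    (hbound : ∀ j, linf (gs j) ≤ β) :
    p ≤ lam * d ∧ linf g ≤ d * β := by
  obtain ⟨hgker, hgne, hgmin⟩ := hg
  have hlamZ : (0:ℤ) < (lam:ℤ) := by exact_mod_cast hlam
  set ε : Fin d → ℤ := fun k => if g k < 0 then -1 else 1 with hε
  have hεg : ∀ k, ε k * g k = |g k| := by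
    intro k
    rcases lt_trichotomy (g k) 0 with h|h|h
    · simp only [hε, if_pos h, abs_of_neg h]; ring
    · simp [hε, h]
    · simp only [hε, if_neg (not_lt.mpr h.le), abs_of_pos h]; ring
  have habs : ∀ j k, |gs j k| ≤ (lam:ℤ) * |g k| := by
    intro j k
    have h := (hconf j k).2
    simpa [Pi.smul_apply, smul_eq_mul, abs_mul, abs_of_pos hlamZ] using h
  have hsignj : ∀ j k, ε k * gs j k = |gs j k| := by
    intro j k
    have hprod : 0 ≤ gs j k * ((lam:ℤ) * g k) := by
      have := (hconf j k).1
      simpa [Pi.smul_apply, smul_eq_mul] using this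
    rcases lt_trichotomy (g k) 0 with h|h|h
    · have hlg : (lam:ℤ) * g k < 0 := mul_neg_of_pos_of_neg hlamZ h
      have h2 : gs j k ≤ 0 := by nlinarith
      simp only [hε, if_pos h]; rw [abs_of_nonpos h2]; ring
    · have h1 : |gs j k| ≤ 0 := by simpa [h] using habs j k
      have h0 : gs j k = 0 := abs_nonpos_iff.mp h1
      simp [hε, h0]
    · have hlg : (0:ℤ) < (lam:ℤ) * g k := mul_pos hlamZ h
      have h2 : 0 ≤ gs j k := by nlinarith
      simp only [hε, if_neg (not_lt.mpr h.le)]; rw [abs_of_nonneg h2]; ring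
  set e : ℕ → Fin d → ℤ := fun j k => if h : j < p then ε k * gs ⟨j, h⟩ k else 0 with he
  set u : ℕ → Fin d → ℤ := fun i k => ∑ j ∈ Finset.range i, e j k with hu
  have he_nonneg : ∀ j k, 0 ≤ e j k := by
    intro j k
    simp only [he]
    split
    · rw [hsignj]; exact abs_nonneg _
    · exact le_refl 0
  have hu_nonneg : ∀ i k, 0 ≤ u i k := fun i k => Finset.sum_nonneg fun j _ => he_nonneg j k
  have hu_mono : ∀ i i' k, i ≤ i' → u i k ≤ u i' k := by
    intro i i' k h
    exact Finset.sum_le_sum_of_subset_of_nonneg (Finset.range_subset_range.mpr h)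
      (fun j _ _ => he_nonneg j k)
  have hupabs : ∀ k, u p k = ∑ j : Fin p, |gs j k| := by
    intro k
    calc u p k = ∑ j ∈ Finset.range p, e j k := rfl
    _ = ∑ j : Fin p, e j k := (Fin.sum_univ_eq_sum_range (fun j => e j k) p).symm
    _ = ∑ j : Fin p, |gs j k| := by
        apply Finset.sum_congr rfl
        intro j _
        simp only [he]
        rw [dif_pos j.isLt, Fin.eta, hsignj]
  have hup : ∀ k, u p k = (lam:ℤ) * |g k| := by
    intro k
    have hs := congrFun hsum k
    simp only [Pi.smul_apply, smul_eq_mul, Finset.sum_apply] at hs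
    calc u p k = ∑ j ∈ Finset.range p, e j k := rfl
    _ = ∑ j : Fin p, e j k := (Fin.sum_univ_eq_sum_range (fun j => e j k) p).symm
    _ = ∑ j : Fin p, ε k * gs j k := by
        apply Finset.sum_congr rfl
        intro j _
        simp only [he]
        rw [dif_pos j.isLt, Fin.eta]
    _ = ε k * ∑ j, gs j k := by rw [Finset.mul_sum]
    _ = ε k * ((lam:ℤ) * g k) := by rw [← hs]
    _ = (lam:ℤ) * (ε k * g k) := by ring
    _ = _ := by rw [hεg]
  set t : ℕ → Fin d → ℤ := fun i k => (u i k + |g k| - 1) / |g k| with ht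
  have ht_mono : ∀ i k, t i k ≤ t (i+1) k := by
    intro i k
    rcases eq_or_lt_of_le (abs_nonneg (g k)) with h|h
    · simp only [ht, ← h, Int.ediv_zero, le_refl]
    · exact Int.ediv_le_ediv h (by have := hu_mono i (i+1) k (Nat.le_succ i); linarith)
  have ht_le : ∀ i, i ≤ p → ∀ k, t i k ≤ (lam:ℤ) := by
    intro i hi k
    rcases eq_or_lt_of_le (abs_nonneg (g k)) with h|h
    · simp only [ht, ← h, Int.ediv_zero]; exact hlamZ.le
    · apply ceil_le h
      calc u i k ≤ u p k := hu_mono i p k hi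
      _ = (lam:ℤ) * |g k| := hup k
  have hple : p ≤ lam * d := by
    by_contra hcon
    push_neg at hcon
    have hex : ∃ i, i < p ∧ ¬ (∑ k, t i k) < (∑ k, t (i+1) k) := by
      by_contra hall
      push_neg at hall
      have key : ∀ n, n ≤ p → (n:ℤ) ≤ ∑ k, t n k := by
        intro n hn
        induction n with
        | zero =>
          simp only [Nat.cast_zero]
          exact Finset.sum_nonneg fun k _ => by
            rcases eq_or_lt_of_le (abs_nonneg (g k)) with h|h
            · simp only [ht, ← h, Int.ediv_zero, le_refl]
            · exact Int.ediv_nonneg (by have := hu_nonneg 0 k; linarith) h.le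
        | succ m ih =>
          have h1 := hall m (by omega)
          have h2 := ih (by omega)
          push_cast
          linarith
      have hSp : (∑ k, t p k) ≤ (lam:ℤ) * d := by
        calc ∑ k, t p k ≤ ∑ _k : Fin d, (lam:ℤ) := Finset.sum_le_sum (fun k _ => ht_le p le_rfl k)
        _ = (d:ℤ) * lam := by simp [Finset.sum_const, mul_comm]
        _ = (lam:ℤ) * d := mul_comm _ _
      have h5 := key p le_rfl
      have h6 : ((lam:ℤ) * d) < (p:ℤ) := by exact_mod_cast hcon
      linarith
    obtain ⟨i, hip, hSle⟩ := hex
    push_neg at hSle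
    have hle : ∀ k ∈ Finset.univ, t i k ≤ t (i+1) k := fun k _ => ht_mono i k
    have heq : ∑ k, t i k = ∑ k, t (i+1) k := le_antisymm (Finset.sum_le_sum hle) hSle
    have hpt : ∀ k, t i k = t (i+1) k := fun k =>
      (Finset.sum_eq_sum_iff_of_le hle).mp heq k (Finset.mem_univ k)
    set v := gs ⟨i, hip⟩ with hv
    have hek : ∀ k, e i k = |v k| := by
      intro k
      simp only [he]
      rw [dif_pos hip, hsignj]
    have hstep : ∀ k, u (i+1) k = u i k + |v k| := by
      intro k
      calc u (i+1) k = ∑ j ∈ Finset.range (i+1), e j k := rfl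
      _ = (∑ j ∈ Finset.range i, e j k) + e i k := Finset.sum_range_succ _ _
      _ = u i k + |v k| := by rw [hek]
    have hvlt : ∀ k, g k ≠ 0 → |v k| < |g k| := by
      intro k hk
      have hc : 0 < |g k| := abs_pos.mpr hk
      have hband : u (i+1) k - u i k ≤ |g k| - 1 :=
        band_lemma hc (hu_mono i (i+1) k (Nat.le_succ i)) (hpt k)
      have := hstep k
      linarith
    have hvz : ∀ k, g k = 0 → v k = 0 := by
      intro k hk
      have h1 : |v k| ≤ 0 := by simpa [hk] using habs ⟨i, hip⟩ k
      exact abs_nonpos_iff.mp h1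
    have hconfvg : Conf v g := by
      intro k
      constructor
      · have h1 : v k * g k = (ε k * v k) * (ε k * g k) := by
          simp only [hε]; split <;> ring
        rw [h1, hsignj ⟨i, hip⟩ k, hεg]
        exact mul_nonneg (abs_nonneg _) (abs_nonneg _)
      · rcases eq_or_ne (g k) 0 with h|h
        · rw [hvz k h, h]
        · exact (hvlt k h).le
    have hveq : v = g := hgmin v (hker _) (hne _) hconfvg
    obtain ⟨k, hk⟩ := Function.ne_iff.mp hgne
    have hk' : g k ≠ 0 := by simpa using hk
    have := hvlt k hk'
    rw [hveq] at this
    exact absurd this (lt_irrefl _)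
  refine ⟨hple, ?_⟩
  have hβk : ∀ j k, |gs j k| ≤ (β:ℤ) := by
    intro j k
    have h0 : (fun k => (gs j k).natAbs) k ≤ linf (gs j) :=
      Finset.le_sup (f := fun k => (gs j k).natAbs) (Finset.mem_univ k)
    have h1 : (gs j k).natAbs ≤ β := le_trans h0 (hbound j)
    rw [Int.abs_eq_natAbs]
    exact_mod_cast h1
  have hkk : ∀ k, |g k| ≤ (d:ℤ) * β := by
    intro k
    have h1 : (lam:ℤ) * |g k| = ∑ j : Fin p, |gs j k| := by rw [← hup k, hupabs k]
    have h2 : ∑ j : Fin p, |gs j k| ≤ (p:ℤ) * β := by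
      calc ∑ j : Fin p, |gs j k| ≤ ∑ _j : Fin p, (β:ℤ) :=
            Finset.sum_le_sum fun j _ => hβk j k
      _ = (p:ℤ) * β := by simp [Finset.sum_const, mul_comm]
    have h3 : (p:ℤ) * β ≤ (lam:ℤ) * d * β := by
      have hc : (p:ℤ) ≤ (lam:ℤ) * d := by exact_mod_cast hple
      exact mul_le_mul_of_nonneg_right hc (by positivity)
    have h4 : (lam:ℤ) * |g k| ≤ (lam:ℤ) * ((d:ℤ) * β) := by
      calc (lam:ℤ) * |g k| = ∑ j : Fin p, |gs j k| := h1
      _ ≤ (p:ℤ) * β := h2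
      _ ≤ (lam:ℤ) * d * β := h3
      _ = (lam:ℤ) * ((d:ℤ) * β) := by ring
    exact le_of_mul_le_mul_left h4 hlamZ
  have hfin : ∀ k, (g k).natAbs ≤ d * β := by
    intro k
    have h5 := hkk k
    rw [Int.abs_eq_natAbs] at h5
    exact_mod_cast h5
  exact Finset.sup_le fun k _ => hfin k
end

section
/- Let t, σ, γ, N be positive integers, let S be a finite set with |S| = γ, and let CI ⊆ {1,…,t}. For each i ∈ S let g^i ∈ ℤ^t satisfy 1 ≤ |g^i[h]| ≤ σ for every h ∈ CI, and suppose g^i = Σ_{j=1}^N η_j^i where each η_j^i ∈ ℤ^t is sign-compatible with g^i (i.e., η_j^i[h]·g^i[h] ≥ 0 for every coordinate h). Call a pair (i,j) ∈ S×{1,…,N} bad if η_j^i[h] ≠ 0 for some h ∈ CI. Then for every partition of S×{1,…,N} into groups, the number of groups containing more than γ bad pairs is at most σ·|CI|. -/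
open Matrix

/-- the bad-group counting claim. For every partition (group labelling) of
`S × {1,…,N}`, the number of groups containing more than `γ = |S|` bad pairs is at most
`σ·|CI|`. -/
theorem stmt14 (t σ γ N : ℕ) (ht : 0 < t) (hσ : 0 < σ) (hγ : 0 < γ) (hN : 0 < N)
    (S : Type) [Fintype S] [DecidableEq S] (hS : Fintype.card S = γ)
    (CI : Finset (Fin t))
    (g : S → Fin t → ℤ) (η : Fin N → S → Fin t → ℤ)
    (hg : ∀ i, ∀ h ∈ CI, 1 ≤ |g i h| ∧ |g i h| ≤ (σ : ℤ))
    (hsum : ∀ i, g i = ∑ j, η j i)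
    (hsign : ∀ j i h, 0 ≤ η j i h * g i h)
    (G : ℕ) (part : S × Fin N → Fin G) :
    ((Finset.univ : Finset (Fin G)).filter fun b =>
        γ < (Finset.univ.filter fun p : S × Fin N =>
              part p = b ∧ ∃ h ∈ CI, η p.2 p.1 h ≠ 0).card).card
      ≤ σ * CI.card := by
  classical
  set Bad : Finset (S × Fin N) :=
    Finset.univ.filter (fun p : S × Fin N => ∃ h ∈ CI, η p.2 p.1 h ≠ 0) with hBad
  -- key bound: for each i and h ∈ CI, at most σ many j have η j i h ≠ 0
  have key : ∀ (i : S) (h : Fin t), h ∈ CI →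
      (Finset.univ.filter fun j : Fin N => η j i h ≠ 0).card ≤ σ := by
    intro i h hh
    obtain ⟨h1, h2⟩ := hg i h hh
    have hgsum : g i h = ∑ j, η j i h := by
      have := congrFun (hsum i) h
      simpa using this
    have hne : g i h ≠ 0 := by
      intro h0; rw [h0] at h1; simp at h1
    rcases lt_or_gt_of_ne hne with hneg | hpos
    · -- g i h < 0, each η j i h ≤ 0
      have hle : ∀ j, η j i h ≤ 0 := fun j => by nlinarith [hsign j i h]
      have hb : ((Finset.univ.filter fun j : Fin N => η j i h ≠ 0).card : ℤ) ≤
          ∑ j ∈ (Finset.univ.filter fun j : Fin N => η j i h ≠ 0), (-(η j i h)) := by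
        have := Finset.card_nsmul_le_sum
          (Finset.univ.filter fun j : Fin N => η j i h ≠ 0)
          (fun j => -(η j i h)) 1 (by
            intro x hx
            simp only [Finset.mem_filter] at hx
            have := hle x
            show (1:ℤ) ≤ -(η x i h)
            omega)
        simpa using this
      have hb2 : ∑ j ∈ (Finset.univ.filter fun j : Fin N => η j i h ≠ 0), (-(η j i h)) ≤
          ∑ j, (-(η j i h)) := by
        apply Finset.sum_le_sum_of_subset_of_nonneg (Finset.filter_subset _ _)
        intro j _ _
        have := hle j; omega
      have hb3 : ∑ j, (-(η j i h)) = -(g i h) := by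
        rw [Finset.sum_neg_distrib, ← hgsum]
      have habs : |g i h| = -(g i h) := abs_of_neg hneg
      have : ((Finset.univ.filter fun j : Fin N => η j i h ≠ 0).card : ℤ) ≤ (σ : ℤ) := by
        calc _ ≤ _ := hb
          _ ≤ _ := hb2
          _ = -(g i h) := hb3
          _ = |g i h| := habs.symm
          _ ≤ (σ : ℤ) := h2
      exact_mod_cast this
    · -- g i h > 0, each η j i h ≥ 0
      have hle : ∀ j, 0 ≤ η j i h := fun j => by nlinarith [hsign j i h]
      have hb : ((Finset.univ.filter fun j : Fin N => η j i h ≠ 0).card : ℤ) ≤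
          ∑ j ∈ (Finset.univ.filter fun j : Fin N => η j i h ≠ 0), η j i h := by
        have := Finset.card_nsmul_le_sum
          (Finset.univ.filter fun j : Fin N => η j i h ≠ 0)
          (fun j => η j i h) 1 (by
            intro x hx
            simp only [Finset.mem_filter] at hx
            have := hle x
            show (1:ℤ) ≤ η x i h
            omega)
        simpa using this
      have hb2 : ∑ j ∈ (Finset.univ.filter fun j : Fin N => η j i h ≠ 0), η j i h ≤
          ∑ j, η j i h := by
        apply Finset.sum_le_sum_of_subset_of_nonneg (Finset.filter_subset _ _)
        intro j _ _
        exact hle j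
      have habs : |g i h| = g i h := abs_of_pos hpos
      have : ((Finset.univ.filter fun j : Fin N => η j i h ≠ 0).card : ℤ) ≤ (σ : ℤ) := by
        calc _ ≤ _ := hb
          _ ≤ _ := hb2
          _ = g i h := hgsum.symm
          _ = |g i h| := habs.symm
          _ ≤ (σ : ℤ) := h2
      exact_mod_cast this
  -- total number of bad pairs
  have hBadCard : Bad.card ≤ CI.card * (γ * σ) := by
    have hsub : Bad ⊆ CI.biUnion (fun h =>
        Finset.univ.filter fun p : S × Fin N => η p.2 p.1 h ≠ 0) := by
      intro p hp
      rw [hBad, Finset.mem_filter] at hp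
      obtain ⟨-, h, hh, hne⟩ := hp
      exact Finset.mem_biUnion.2 ⟨h, hh, Finset.mem_filter.2 ⟨Finset.mem_univ _, hne⟩⟩
    calc Bad.card ≤ _ := Finset.card_le_card hsub
      _ ≤ ∑ h ∈ CI, (Finset.univ.filter fun p : S × Fin N => η p.2 p.1 h ≠ 0).card :=
        Finset.card_biUnion_le
      _ ≤ ∑ _h ∈ CI, γ * σ := by
        apply Finset.sum_le_sum
        intro h hh
        have heq : (Finset.univ.filter fun p : S × Fin N => η p.2 p.1 h ≠ 0).card =
            ∑ i : S, (Finset.univ.filter fun j : Fin N => η j i h ≠ 0).card := by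
          simp [Finset.card_filter, Fintype.sum_prod_type]
        rw [heq]
        calc ∑ i : S, (Finset.univ.filter fun j : Fin N => η j i h ≠ 0).card
            ≤ ∑ _i : S, σ := Finset.sum_le_sum (fun i _ => key i h hh)
          _ = γ * σ := by simp [hS]
      _ = CI.card * (γ * σ) := by rw [Finset.sum_const, smul_eq_mul]
  -- fiberwise count
  set BG := (Finset.univ : Finset (Fin G)).filter fun b =>
      γ < (Finset.univ.filter fun p : S × Fin N =>
            part p = b ∧ ∃ h ∈ CI, η p.2 p.1 h ≠ 0).card with hBG
  have hfiber : ∀ b : Fin G,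
      (Finset.univ.filter fun p : S × Fin N =>
        part p = b ∧ ∃ h ∈ CI, η p.2 p.1 h ≠ 0) = Bad.filter (fun p => part p = b) := by
    intro b
    rw [hBad, Finset.filter_filter]
    apply Finset.filter_congr
    intro p _
    tauto
  have hsumfib : ∑ b : Fin G, (Bad.filter (fun p => part p = b)).card = Bad.card := by
    exact (Finset.card_eq_sum_card_fiberwise (fun p _ => Finset.mem_univ (part p))).symm
  have hlow : (γ + 1) * BG.card ≤ Bad.card := by
    calc (γ + 1) * BG.card = ∑ _b ∈ BG, (γ + 1) := by
          rw [Finset.sum_const, smul_eq_mul, mul_comm]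
      _ ≤ ∑ b ∈ BG, (Bad.filter (fun p => part p = b)).card := by
          apply Finset.sum_le_sum
          intro b hb
          rw [hBG, Finset.mem_filter] at hb
          rw [← hfiber b]
          omega
      _ ≤ ∑ b : Fin G, (Bad.filter (fun p => part p = b)).card :=
          Finset.sum_le_sum_of_subset (Finset.filter_subset _ _)
      _ = Bad.card := hsumfib
  -- conclude
  have hfinal : (γ + 1) * BG.card ≤ (γ + 1) * (σ * CI.card) := by
    calc (γ + 1) * BG.card ≤ Bad.card := hlow
      _ ≤ CI.card * (γ * σ) := hBadCard
      _ ≤ (γ + 1) * (σ * CI.card) := by ring_nf; nlinarith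
  exact Nat.le_of_mul_le_mul_left hfinal (by omega)
end
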